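/- arXiv:1411.8005 — 8 statements merged into one kernel-verified Lean document; each statement's English description precedes it below -/
import Mathlib

section
/- Let G : ℝ → ℝ be continuously differentiable and suppose G has the KL property at every point of ℝ. Let ū be a critical point of G. Then there exists η > 0 such that for every u with |u − ū| < η, if G(u) = G(ū) then G′(u) = 0. -/
open Real Set Metric Filter Topology

noncomputable section

/-- `φ` is a desingularizing function of `G : ℝ → ℝ` at `ub` on `(ub - η, ub + η)`,
with domain `[0, r₀)`. -/
def DesingOn1 (G : ℝ → ℝ) (ub η r₀ : ℝ) (φ : ℝ → ℝ) : Prop :=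
  0 < r₀ ∧ 0 < η ∧ φ 0 = 0 ∧ (∀ s ∈ Set.Ico (0:ℝ) r₀, 0 ≤ φ s) ∧
  ContinuousOn φ (Set.Ico 0 r₀) ∧
  (∀ s ∈ Set.Ioo (0:ℝ) r₀, DifferentiableAt ℝ φ s) ∧
  ContinuousOn (deriv φ) (Set.Ioo 0 r₀) ∧
  (∀ s ∈ Set.Ioo (0:ℝ) r₀, 0 < deriv φ s) ∧
  (∀ u : ℝ, |u - ub| < η → |G u - G ub| < r₀) ∧
  (∀ u : ℝ, |u - ub| < η → G u ≠ G ub →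
    1 ≤ deriv φ (|G u - G ub|) * |deriv G u|)

/-- Key step: if `G = G ub` at both endpoints of an interval contained in the KL
neighborhood, but `G ≠ G ub` somewhere inside, we get a contradiction, since the
interior max of `|G - G ub|` is a noncritical point with nonzero `|G - G ub|`. -/
lemma keyA (G : ℝ → ℝ) (hGc : Continuous G) (ub η r₀ : ℝ) (φ : ℝ → ℝ)
    (hD : DesingOn1 G ub η r₀ φ) (a b : ℝ) (hab : a < b)
    (hin : ∀ x ∈ Set.Icc a b, |x - ub| < η)
    (ha : G a = G ub) (hb : G b = G ub)
    (z : ℝ) (hz : z ∈ Set.Ioo a b) (hGz : G z ≠ G ub) : False := by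
  obtain ⟨w, hwmem, hwmax⟩ :=
    (isCompact_Icc (a := a) (b := b)).exists_isMaxOn (Set.nonempty_Icc.2 hab.le)
      ((continuous_abs.comp (hGc.sub continuous_const)).continuousOn)
  have hzval : 0 < |G z - G ub| := abs_pos.2 (sub_ne_zero.2 hGz)
  have hzw : |G z - G ub| ≤ |G w - G ub| := hwmax (Set.mem_Icc.2 ⟨hz.1.le, hz.2.le⟩)
  have hGw : G w ≠ G ub := by
    intro h
    rw [h, sub_self, abs_zero] at hzw
    linarith
  have hwa : w ≠ a := by rintro rfl; rw [ha, sub_self, abs_zero] at hzw; linarith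
  have hwb : w ≠ b := by rintro rfl; rw [hb, sub_self, abs_zero] at hzw; linarith
  have hwIoo : w ∈ Set.Ioo a b :=
    ⟨lt_of_le_of_ne hwmem.1 (Ne.symm hwa), lt_of_le_of_ne hwmem.2 hwb⟩
  have hnhds : Set.Icc a b ∈ 𝓝 w := Icc_mem_nhds hwIoo.1 hwIoo.2
  have hloc : IsLocalMax (fun x => |G x - G ub|) w :=
    hwmax.isLocalMax hnhds
  -- deriv G w = 0
  have hderw : deriv G w = 0 := by
    rcases lt_or_gt_of_ne (sub_ne_zero.2 hGw) with hneg | hpos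
    · -- G w < G ub : local min of G
      have : IsLocalMin G w := by
        have habs : |G w - G ub| = -(G w - G ub) := abs_of_neg hneg
        filter_upwards [hloc] with x hx
        have h1 : -(G x - G ub) ≤ |G x - G ub| := neg_le_abs _
        simp only [habs] at hx
        linarith
      exact this.deriv_eq_zero
    · -- G w > G ub : local max of G
      have : IsLocalMax G w := by
        have habs : |G w - G ub| = G w - G ub := abs_of_pos hpos
        filter_upwards [hloc] with x hx
        have h1 : G x - G ub ≤ |G x - G ub| := le_abs_self _
        simp only [habs] at hx
        linarith
      exact this.deriv_eq_zero
  have hKLw := hD.2.2.2.2.2.2.2.2.2 w (hin w hwmem) hGw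
  rw [hderw, abs_zero, mul_zero] at hKLw
  linarith

theorem stmt1 (G : ℝ → ℝ) (hG : ContDiff ℝ 1 G)
    (hKL : ∀ x : ℝ, ∃ η r₀ φ, DesingOn1 G x η r₀ φ)
    (ub : ℝ) (hub : deriv G ub = 0) :
    ∃ η > 0, ∀ u : ℝ, |u - ub| < η → G u = G ub → deriv G u = 0 := by
  obtain ⟨η, r₀, φ, hD⟩ := hKL ub
  have hηpos : 0 < η := hD.2.1
  have hGc : Continuous G := hG.continuous
  refine ⟨η, hηpos, fun u hu hGu => ?_⟩
  by_contra hder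
  have hune : u ≠ ub := by rintro rfl; exact hder hub
  -- slope of G at u tends to deriv G u ≠ 0
  have hda : HasDerivAt G (deriv G u) u :=
    ((hG.differentiable one_ne_zero) u).hasDerivAt
  have hslope := hasDerivAt_iff_tendsto_slope.mp hda
  have hev : ∀ᶠ z in 𝓝[≠] u, G z ≠ G u := by
    filter_upwards [hslope.eventually_ne hder, self_mem_nhdsWithin] with z hz hz'
    intro hGzu
    apply hz
    simp [slope, hGzu, vsub_eq_sub]
  rcases lt_or_gt_of_ne hune with hlt | hgt
  · -- u < ub : work on Ioo u ub
    have hne : (𝓝[Set.Ioo u ub] u).NeBot := left_nhdsWithin_Ioo_neBot hlt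
    have hle : 𝓝[Set.Ioo u ub] u ≤ 𝓝[≠] u :=
      nhdsWithin_mono u (fun x hx => ne_of_gt hx.1)
    obtain ⟨z, hzne, hzmem⟩ :=
      (((hev.filter_mono hle).and self_mem_nhdsWithin).exists :
        ∃ z, G z ≠ G u ∧ z ∈ Set.Ioo u ub)
    refine keyA G hGc ub η r₀ φ hD u ub hlt ?_ hGu rfl z hzmem (hGu ▸ hzne)
    intro x hx
    have : |x - ub| ≤ |u - ub| := by
      rw [abs_sub_comm, abs_sub_comm u ub]
      rw [abs_of_nonneg (by linarith [hx.2] : (0:ℝ) ≤ ub - x),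
        abs_of_nonneg (by linarith : (0:ℝ) ≤ ub - u)]
      linarith [hx.1]
    linarith
  · -- ub < u : work on Ioo ub u
    have hne : (𝓝[Set.Ioo ub u] u).NeBot := right_nhdsWithin_Ioo_neBot hgt
    have hle : 𝓝[Set.Ioo ub u] u ≤ 𝓝[≠] u :=
      nhdsWithin_mono u (fun x hx => ne_of_lt hx.2)
    obtain ⟨z, hzne, hzmem⟩ :=
      (((hev.filter_mono hle).and self_mem_nhdsWithin).exists :
        ∃ z, G z ≠ G u ∧ z ∈ Set.Ioo ub u)
    refine keyA G hGc ub η r₀ φ hD ub u hgt ?_ rfl hGu z hzmem (hGu ▸ hzne)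
    intro x hx
    have : |x - ub| ≤ |u - ub| := by
      rw [abs_of_nonneg (by linarith [hx.1] : (0:ℝ) ≤ x - ub),
        abs_of_nonneg (by linarith : (0:ℝ) ≤ u - ub)]
      linarith [hx.2]
    linarith
end
end

section
/- Let G : ℝ^N → ℝ be differentiable on the open ball B(ū, 2ε) with ∇G Lipschitz continuous on B(ū, 2ε) with Lipschitz constant L₂, and assume that for every u ∈ B(ū, 2ε), G(u) = G(ū) implies ∇G(u) = 0. Define H(u) = |G(u) − G(ū)| for u ∈ B(ū, 2ε). Then H is differentiable on B(ū, 2ε) with ∇H(u) = sign(G(u) − G(ū))·∇G(u), and ∇H is Lipschitz continuous on B(ū, 2ε) with the same Lipschitz constant L₂. -/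
open Real Set Metric Filter Topology

noncomputable section

theorem stmt3 {N : ℕ} (ub : EuclideanSpace ℝ (Fin N)) (ε : ℝ) (hε : 0 < ε)
    (G : EuclideanSpace ℝ (Fin N) → ℝ)
    (hdiff : ∀ u ∈ ball ub (2 * ε), DifferentiableAt ℝ G u)
    (L₂ : NNReal) (hLip : LipschitzOnWith L₂ (gradient G) (ball ub (2 * ε)))
    (hcrit : ∀ u ∈ ball ub (2 * ε), G u = G ub → gradient G u = 0) :
    (∀ u ∈ ball ub (2 * ε),
      HasGradientAt (fun w => |G w - G ub|) (Real.sign (G u - G ub) • gradient G u) u) ∧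
    LipschitzOnWith L₂ (fun u => Real.sign (G u - G ub) • gradient G u)
      (ball ub (2 * ε)) := by
  have hnorm : ∀ ⦃x⦄, x ∈ ball ub (2 * ε) → ∀ ⦃y⦄, y ∈ ball ub (2 * ε) →
      ‖gradient G x - gradient G y‖ ≤ L₂ * ‖x - y‖ :=
    lipschitzOnWith_iff_norm_sub_le.1 hLip
  constructor
  · intro u hu
    rcases eq_or_ne (G u - G ub) 0 with h0 | h0
    · have hg0 : gradient G u = 0 := hcrit u hu (by linarith)
      have hG : HasGradientAt G 0 u := hg0 ▸ (hdiff u hu).hasGradientAt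
      rw [h0, Real.sign_zero, zero_smul, hasGradientAt_iff_isLittleO]
      rw [hasGradientAt_iff_isLittleO] at hG
      have hGub : G ub = G u := by linarith
      have hnl := hG.norm_left
      refine hnl.congr_left fun w => ?_
      simp [hGub, inner_zero_left, Real.norm_eq_abs]
    · have hF : HasFDerivAt (fun w => G w - G ub)
          ((InnerProductSpace.toDual ℝ _) (gradient G u)) u :=
        (hasGradientAt_iff_hasFDerivAt.1 (hdiff u hu).hasGradientAt).sub_const _
      have habs := hF.abs (x := u) (by simpa using h0)
      rw [hasGradientAt_iff_hasFDerivAt, map_smul]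
      have hs : Real.sign (G u - G ub) = ((SignType.sign (G u - G ub) : ℝ)) := by
        rcases h0.lt_or_gt with h | h
        · rw [Real.sign_of_neg h, sign_neg h]; simp
        · rw [Real.sign_of_pos h, sign_pos h]; simp
      rw [hs]
      exact habs
  · rw [lipschitzOnWith_iff_norm_sub_le]
    set F : EuclideanSpace ℝ (Fin N) → EuclideanSpace ℝ (Fin N) :=
      fun u => Real.sign (G u - G ub) • gradient G u with hFdef
    have hFnorm : ∀ u, ‖F u‖ ≤ ‖gradient G u‖ := by
      intro u
      rw [hFdef]
      simp only [norm_smul, Real.norm_eq_abs]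
      rcases Real.sign_apply_eq (G u - G ub) with h | h | h <;> rw [h] <;> simp
    have hzero_case : ∀ u ∈ ball ub (2 * ε), ∀ v ∈ ball ub (2 * ε), G u - G ub = 0 →
        ‖F u - F v‖ ≤ L₂ * ‖u - v‖ := by
      intro u hu v hv h0
      have hg0 : gradient G u = 0 := hcrit u hu (by linarith)
      have hFu : F u = 0 := by rw [hFdef]; simp [h0, Real.sign_zero]
      calc ‖F u - F v‖ = ‖F v‖ := by rw [hFu, zero_sub, norm_neg]
        _ ≤ ‖gradient G v‖ := hFnorm v
        _ = ‖gradient G v - gradient G u‖ := by rw [hg0, sub_zero]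
        _ ≤ L₂ * ‖v - u‖ := hnorm hv hu
        _ = L₂ * ‖u - v‖ := by rw [norm_sub_rev]
    have key : ∀ u ∈ ball ub (2 * ε), ∀ v ∈ ball ub (2 * ε), G u - G ub < 0 →
        0 < G v - G ub → ‖F u - F v‖ ≤ L₂ * ‖u - v‖ := by
      intro u hu v hv hau hbv
      obtain ⟨θ, hθ, hw⟩ : ∃ θ ∈ Icc (0:ℝ) 1, G (AffineMap.lineMap u v θ) = G ub := by
        have hcont : ContinuousOn (fun θ : ℝ => G (AffineMap.lineMap u v θ)) (Icc 0 1) := by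
          have hGc : ContinuousOn G (ball ub (2 * ε)) :=
            fun x hx => ((hdiff x hx).continuousAt).continuousWithinAt
          have hmaps : MapsTo (fun θ : ℝ => (AffineMap.lineMap u v) θ) (Icc (0:ℝ) 1)
              (ball ub (2 * ε)) :=
            fun θ hθ => (convex_ball ub (2 * ε)).lineMap_mem hu hv hθ
          have hlc : Continuous (⇑(AffineMap.lineMap u v) : ℝ → EuclideanSpace ℝ (Fin N)) :=
            AffineMap.lineMap_continuous
          exact hGc.comp hlc.continuousOn hmaps
        have hmem : G ub ∈ Icc ((fun θ : ℝ => G (AffineMap.lineMap u v θ)) 0)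
            ((fun θ : ℝ => G (AffineMap.lineMap u v θ)) 1) := by
          simp only [AffineMap.lineMap_apply_zero, AffineMap.lineMap_apply_one]
          constructor <;> [linarith; linarith]
        obtain ⟨θ, hθ, h⟩ := intermediate_value_Icc zero_le_one hcont hmem
        exact ⟨θ, hθ, h⟩
      set w := AffineMap.lineMap u v θ with hwdef
      have hwball : w ∈ ball ub (2 * ε) := (convex_ball ub (2 * ε)).lineMap_mem hu hv hθ
      have hgw : gradient G w = 0 := hcrit w hwball hw
      have h1 : ‖gradient G u‖ ≤ L₂ * ‖u - w‖ := by
        have := hnorm hu hwball; rwa [hgw, sub_zero] at this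
      have h2 : ‖gradient G v‖ ≤ L₂ * ‖v - w‖ := by
        have := hnorm hv hwball; rwa [hgw, sub_zero] at this
      have hFu : F u = -gradient G u := by rw [hFdef]; simp [Real.sign_of_neg hau]
      have hFv : F v = gradient G v := by rw [hFdef]; simp [Real.sign_of_pos hbv]
      have huw : u - w = (-θ) • (v - u) := by
        rw [hwdef, AffineMap.lineMap_apply_module]
        module
      have hvw : v - w = (1 - θ) • (v - u) := by
        rw [hwdef, AffineMap.lineMap_apply_module]
        module
      have hdist : ‖u - w‖ + ‖v - w‖ = ‖u - v‖ := by
        rw [huw, hvw, norm_smul, norm_smul, Real.norm_eq_abs, Real.norm_eq_abs,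
          abs_neg, abs_of_nonneg hθ.1, abs_of_nonneg (by linarith [hθ.2] : (0:ℝ) ≤ 1 - θ),
          norm_sub_rev]
        ring
      calc ‖F u - F v‖ = ‖gradient G u + gradient G v‖ := by
            rw [hFu, hFv, ← norm_neg]; congr 1; abel
        _ ≤ ‖gradient G u‖ + ‖gradient G v‖ := norm_add_le _ _
        _ ≤ L₂ * ‖u - w‖ + L₂ * ‖v - w‖ := add_le_add h1 h2
        _ = L₂ * ‖u - v‖ := by rw [← hdist]; ring
    intro u hu v hv
    rcases lt_trichotomy (G u - G ub) 0 with hau | hau | hau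
    · rcases lt_trichotomy (G v - G ub) 0 with hbv | hbv | hbv
      · have hFu : F u = -gradient G u := by rw [hFdef]; simp [Real.sign_of_neg hau]
        have hFv : F v = -gradient G v := by rw [hFdef]; simp [Real.sign_of_neg hbv]
        calc ‖F u - F v‖ = ‖gradient G u - gradient G v‖ := by
              rw [hFu, hFv, ← norm_neg]; congr 1; abel
          _ ≤ L₂ * ‖u - v‖ := hnorm hu hv
      · rw [← norm_neg, neg_sub]
        calc ‖F v - F u‖ ≤ L₂ * ‖v - u‖ := hzero_case v hv u hu hbv
          _ = L₂ * ‖u - v‖ := by rw [norm_sub_rev]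
      · exact key u hu v hv hau hbv
    · exact hzero_case u hu v hv hau
    · rcases lt_trichotomy (G v - G ub) 0 with hbv | hbv | hbv
      · rw [← norm_neg, neg_sub]
        calc ‖F v - F u‖ ≤ L₂ * ‖v - u‖ := key v hv u hu hbv hau
          _ = L₂ * ‖u - v‖ := by rw [norm_sub_rev]
      · rw [← norm_neg, neg_sub]
        calc ‖F v - F u‖ ≤ L₂ * ‖v - u‖ := hzero_case v hv u hu hbv
          _ = L₂ * ‖u - v‖ := by rw [norm_sub_rev]
      · have hFu : F u = gradient G u := by rw [hFdef]; simp [Real.sign_of_pos hau]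
        have hFv : F v = gradient G v := by rw [hFdef]; simp [Real.sign_of_pos hbv]
        calc ‖F u - F v‖ = ‖gradient G u - gradient G v‖ := by rw [hFu, hFv]
          _ ≤ L₂ * ‖u - v‖ := hnorm hu hv
end
end

section
/- Let G : ℝ^N → ℝ be differentiable with locally Lipschitz gradient, let ū be a critical point of G (i.e. ∇G(ū) = 0), and suppose there exists ε > 0 such that for every u ∈ B(ū, 2ε), G(u) = G(ū) implies ∇G(u) = 0. Then there exists c > 0 such that |G(u) − G(ū)| ≥ c·‖∇G(u)‖² for all u ∈ B(ū, ε). -/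
open Real Set Metric Filter Topology

noncomputable section

open scoped NNReal RealInnerProductSpace

/-- A locally Lipschitz function is Lipschitz on a compact convex set. -/
theorem exists_lipschitzOnWith_of_locallyLipschitz
    {E F : Type*} [NormedAddCommGroup E] [NormedSpace ℝ E] [PseudoMetricSpace F]
    {f : E → F} (hf : LocallyLipschitz f) {s : Set E} (hs : IsCompact s)
    (hc : Convex ℝ s) : ∃ K : ℝ≥0, LipschitzOnWith K f s := by
  rcases s.eq_empty_or_nonempty with rfl | hsne
  · exact ⟨1, by simp⟩
  have h : ∀ x : E, ∃ (K : ℝ≥0) (r : ℝ), 0 < r ∧ LipschitzOnWith K f (ball x r) := by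
    intro x
    obtain ⟨K, t, ht, hlip⟩ := hf x
    obtain ⟨r, hr, hball⟩ := Metric.mem_nhds_iff.1 ht
    exact ⟨K, r, hr, hlip.mono hball⟩
  choose K r hrpos hlip using h
  obtain ⟨I, hIs, hIfin, hcover⟩ := hs.elim_finite_subcover_image
    (fun x (_ : x ∈ s) => isOpen_ball (x := x) (ε := r x / 2)) (fun x hx => by
      exact mem_biUnion hx (by simp [mem_ball, half_pos (hrpos x)]))
  classical
  set t : Finset E := hIfin.toFinset with ht
  have htne : t.Nonempty := by
    obtain ⟨x, hx⟩ := hsne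
    have := hcover hx
    simp only [mem_iUnion] at this
    obtain ⟨i, hi, _⟩ := this
    exact ⟨i, by simpa [ht] using hi⟩
  set K0 : ℝ≥0 := t.sup K with hK0
  set δ : ℝ := t.inf' htne (fun i => r i / 2) with hδ
  have hδpos : 0 < δ := by
    rw [hδ]
    exact (Finset.lt_inf'_iff htne).2 fun i _ => half_pos (hrpos i)
  -- local estimate
  have hloc : ∀ x ∈ s, ∀ y ∈ s, dist x y < δ → dist (f x) (f y) ≤ K0 * dist x y := by
    intro x hx y _ hxy
    have := hcover hx
    simp only [mem_iUnion] at this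
    obtain ⟨i, hi, hxi⟩ := this
    have hit : i ∈ t := by simpa [ht] using hi
    have hδi : δ ≤ r i / 2 := Finset.inf'_le _ hit
    have hxball : x ∈ ball i (r i) :=
      mem_ball.2 (lt_of_lt_of_le hxi (by linarith [(hrpos i).le]))
    have hyball : y ∈ ball i (r i) := by
      rw [mem_ball] at *
      calc dist y i ≤ dist y x + dist x i := dist_triangle _ _ _
        _ < δ + r i / 2 := by rw [dist_comm y x]; linarith
        _ ≤ r i := by linarith
    calc dist (f x) (f y) ≤ K i * dist x y := (hlip i).dist_le_mul x hxball y hyball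
      _ ≤ K0 * dist x y := by
        gcongr
        exact_mod_cast Finset.le_sup (f := K) hit
  refine ⟨K0, LipschitzOnWith.of_dist_le_mul fun x hx y hy => ?_⟩
  rcases eq_or_ne x y with rfl | hne
  · simp
  have hdpos : 0 < dist x y := dist_pos.2 hne
  set n : ℕ := ⌈dist x y / δ⌉₊ + 1 with hn
  have hnpos : 0 < (n : ℝ) := by positivity
  have hstep : dist x y / n < δ := by
    rw [div_lt_iff₀ hnpos]
    have : dist x y / δ < n := by
      calc dist x y / δ ≤ ⌈dist x y / δ⌉₊ := Nat.le_ceil _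
        _ < n := by exact_mod_cast Nat.lt_succ_self _
    calc dist x y = (dist x y / δ) * δ := by field_simp
      _ < n * δ := by gcongr
      _ = δ * n := mul_comm _ _
  set w : ℕ → E := fun k => x + ((k : ℝ) / n) • (y - x) with hw
  have hwmem : ∀ k ≤ n, w k ∈ s := by
    intro k hk
    have h0 : (0:ℝ) ≤ (k : ℝ) / n := by positivity
    have h1 : (k : ℝ) / n ≤ 1 := by
      rw [div_le_one hnpos]; exact_mod_cast hk
    have : w k = (1 - (k:ℝ)/n) • x + ((k:ℝ)/n) • y := by
      rw [hw]; simp only [smul_sub, sub_smul, one_smul]; abel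
    rw [this]
    exact hc hx hy (by linarith) h0 (by ring)
  have hwdist : ∀ k, dist (w k) (w (k+1)) = dist x y / n := by
    intro k
    have : w (k+1) - w k = ((1:ℝ)/n) • (y - x) := by
      rw [hw]; simp only
      rw [add_sub_add_left_eq_sub, ← sub_smul]
      congr 1
      push_cast
      ring
    rw [dist_comm (w k), dist_eq_norm, this, norm_smul, dist_eq_norm, norm_sub_rev x y]
    simp only [Real.norm_eq_abs, abs_of_nonneg (by positivity : (0:ℝ) ≤ 1/(n:ℝ))]
    ring
  have hw0 : w 0 = x := by simp [hw]
  have hwn : w n = y := by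
    have : ((n:ℝ))/((n:ℝ)) = 1 := div_self (ne_of_gt hnpos)
    rw [hw]; simp only [this, one_smul]; abel
  calc dist (f x) (f y) = dist (f (w 0)) (f (w n)) := by rw [hw0, hwn]
    _ ≤ ∑ i ∈ Finset.range n, dist (f (w i)) (f (w (i+1))) :=
        dist_le_range_sum_dist (fun k => f (w k)) n
    _ ≤ ∑ i ∈ Finset.range n, K0 * (dist x y / n) := by
        apply Finset.sum_le_sum
        intro i hi
        rw [Finset.mem_range] at hi
        have h1 := hwmem i hi.le
        have h2 := hwmem (i+1) hi
        have := hloc _ h1 _ h2 (by rw [hwdist]; exact hstep)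
        rwa [hwdist i] at this
    _ = K0 * dist x y := by
        rw [Finset.sum_const, Finset.card_range, nsmul_eq_mul]
        field_simp

/-- Descent lemma: quantitative bound when `G ub < G u`. -/
theorem descent_bound {N : ℕ} (G : EuclideanSpace ℝ (Fin N) → ℝ)
    (hdiff : Differentiable ℝ G)
    (ub : EuclideanSpace ℝ (Fin N)) (hub : gradient G ub = 0)
    (ε : ℝ) (hε : 0 < ε) (K : ℝ≥0)
    (hK : LipschitzOnWith K (gradient G) (closedBall ub (2 * ε)))
    (hKpos : 0 < (K : ℝ))
    (hcrit : ∀ u ∈ ball ub (2 * ε), G u = G ub → gradient G u = 0)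
    (u : EuclideanSpace ℝ (Fin N)) (hu : u ∈ ball ub ε)
    (hne : gradient G u ≠ 0) (hgt : G ub < G u) :
    (1 / (4 * K)) * ‖gradient G u‖ ^ 2 ≤ G u - G ub := by
  set g := gradient G u with hg
  set M : ℝ := (K : ℝ) with hM
  set t0 : ℝ := 1 / (2 * M) with ht0
  have ht0pos : 0 < t0 := by positivity
  have hgnorm : 0 < ‖g‖ := norm_pos_iff.2 hne
  have hεball : ball ub ε ⊆ closedBall ub (2 * ε) :=
    (ball_subset_closedBall).trans (closedBall_subset_closedBall (by linarith))
  have humem : u ∈ closedBall ub (2 * ε) := hεball hu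
  have hubmem : ub ∈ closedBall ub (2 * ε) := mem_closedBall_self (by linarith)
  -- ‖g‖ ≤ M * ε
  have hgε : ‖g‖ ≤ M * ε := by
    have := hK.dist_le_mul u humem ub hubmem
    rw [hub, dist_zero_right] at this
    calc ‖g‖ ≤ M * dist u ub := this
      _ ≤ M * ε := by
        have : dist u ub < ε := mem_ball.1 hu
        nlinarith
  set p : ℝ → EuclideanSpace ℝ (Fin N) := fun t => u - t • g with hp
  have hp0 : p 0 = u := by simp [hp]
  -- membership of the path
  have hpmem : ∀ t ∈ Icc (0:ℝ) t0, p t ∈ ball ub (2 * ε) := by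
    intro t ht
    rw [mem_ball]
    have h1 : dist (p t) ub ≤ dist (p t) u + dist u ub := dist_triangle _ _ _
    have h2 : dist (p t) u = t * ‖g‖ := by
      rw [hp, dist_eq_norm]
      simp only [sub_sub_cancel_left, norm_neg, norm_smul, Real.norm_eq_abs,
        abs_of_nonneg ht.1]
    have h3 : t * ‖g‖ ≤ t0 * (M * ε) := by
      have := ht.2
      nlinarith [ht.1, hgnorm.le]
    have h4 : t0 * (M * ε) = ε / 2 := by
      rw [ht0]; field_simp
    have h5 : dist u ub < ε := mem_ball.1 hu
    rw [h2] at h1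
    linarith
  have hpmem' : ∀ t ∈ Icc (0:ℝ) t0, p t ∈ closedBall ub (2 * ε) :=
    fun t ht => ball_subset_closedBall (hpmem t ht)
  -- gradient stays close to g
  have hclose : ∀ t ∈ Icc (0:ℝ) t0, ‖gradient G (p t) - g‖ ≤ ‖g‖ / 2 := by
    intro t ht
    have h1 : dist (gradient G (p t)) (gradient G u) ≤ M * dist (p t) u :=
      hK.dist_le_mul _ (hpmem' t ht) _ humem
    have h2 : dist (p t) u = t * ‖g‖ := by
      rw [hp, dist_eq_norm]
      simp only [sub_sub_cancel_left, norm_neg, norm_smul, Real.norm_eq_abs,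
        abs_of_nonneg ht.1]
    rw [dist_eq_norm, h2] at h1
    calc ‖gradient G (p t) - g‖ ≤ M * (t * ‖g‖) := h1
      _ ≤ M * (t0 * ‖g‖) :=
          mul_le_mul_of_nonneg_left (mul_le_mul_of_nonneg_right ht.2 hgnorm.le) hKpos.le
      _ = ‖g‖ / 2 := by rw [ht0]; field_simp
  -- the gradient never vanishes on the path
  have hgradne : ∀ t ∈ Icc (0:ℝ) t0, gradient G (p t) ≠ 0 := by
    intro t ht h0
    have := hclose t ht
    rw [h0, zero_sub, norm_neg] at this
    linarith
  -- inner product bound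
  have hinner : ∀ t ∈ Icc (0:ℝ) t0, ‖g‖ ^ 2 / 2 ≤ ⟪gradient G (p t), g⟫ := by
    intro t ht
    have hdec : ⟪gradient G (p t), g⟫ = ⟪g, g⟫ + ⟪gradient G (p t) - g, g⟫ := by
      rw [← inner_add_left]; congr 1; abel
    have h1 : |⟪gradient G (p t) - g, g⟫| ≤ ‖gradient G (p t) - g‖ * ‖g‖ :=
      abs_real_inner_le_norm _ _
    have h2 := hclose t ht
    have h3 : ⟪g, g⟫ = ‖g‖ ^ 2 := real_inner_self_eq_norm_sq g
    have h4 : -(‖g‖/2 * ‖g‖) ≤ ⟪gradient G (p t) - g, g⟫ := by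
      have := neg_abs_le (⟪gradient G (p t) - g, g⟫)
      nlinarith [hgnorm.le]
    rw [hdec, h3]
    nlinarith
  -- derivative of G along the path
  have hderiv : ∀ t : ℝ, HasDerivAt (fun t => G (p t)) (-⟪gradient G (p t), g⟫) t := by
    intro t
    have hpd : HasDerivAt p (-g) t := by
      have h1 : HasDerivAt (fun t : ℝ => t • g) g t := by
        simpa using (hasDerivAt_id t).smul_const g
      simpa using h1.const_sub u
    have hGd := (hdiff (p t)).hasGradientAt.hasFDerivAt.comp_hasDerivAt t hpd
    have : (InnerProductSpace.toDual ℝ _ (gradient G (p t))) (-g)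
        = -⟪gradient G (p t), g⟫ := by
      rw [InnerProductSpace.toDual_apply_apply, inner_neg_right]
    rwa [this] at hGd
  -- ψ is antitone
  set ψ : ℝ → ℝ := fun t => G (p t) + (‖g‖ ^ 2 / 2) * t with hψdef
  have hψd : ∀ t : ℝ, HasDerivAt ψ (-⟪gradient G (p t), g⟫ + ‖g‖ ^ 2 / 2) t := by
    intro t
    exact (hderiv t).add ((hasDerivAt_id t).const_mul (‖g‖ ^ 2 / 2) |>.congr_deriv (by ring))
  have hψanti : AntitoneOn ψ (Icc 0 t0) := by
    apply antitoneOn_of_deriv_nonpos (convex_Icc 0 t0)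
    · exact (Differentiable.continuous fun t => (hψd t).differentiableAt).continuousOn
    · exact fun t _ => ((hψd t).differentiableAt).differentiableWithinAt
    · intro t ht
      rw [interior_Icc] at ht
      rw [(hψd t).deriv]
      have := hinner t (Ioo_subset_Icc_self ht)
      linarith
  have hkey : G (p t0) + ‖g‖ ^ 2 / 2 * t0 ≤ G u := by
    have := hψanti (left_mem_Icc.2 ht0pos.le) (right_mem_Icc.2 ht0pos.le) ht0pos.le
    simpa [hψdef, hp0] using this
  -- sign constancy along the path
  have hnever : ∀ t ∈ Icc (0:ℝ) t0, G (p t) ≠ G ub := by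
    intro t ht h0
    exact hgradne t ht (hcrit _ (hpmem t ht) h0)
  have hfin : G ub < G (p t0) := by
    by_contra hcon
    push_neg at hcon
    have hlt : G (p t0) < G ub :=
      lt_of_le_of_ne hcon (hnever t0 (right_mem_Icc.2 ht0pos.le))
    have hcont : ContinuousOn (fun t => G (p t)) (Icc 0 t0) :=
      (Differentiable.continuous fun t => (hderiv t).differentiableAt).continuousOn
    have hsub := intermediate_value_Icc' ht0pos.le hcont
    have : G ub ∈ Icc (G (p t0)) (G (p 0)) := by
      rw [hp0]; exact ⟨hlt.le, hgt.le⟩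
    obtain ⟨t, htmem, ht⟩ := hsub this
    exact hnever t htmem ht
  -- conclusion
  have ht0val : ‖g‖ ^ 2 / 2 * t0 = 1 / (4 * M) * ‖g‖ ^ 2 := by
    rw [ht0]; field_simp; ring
  show 1 / (4 * M) * ‖g‖ ^ 2 ≤ G u - G ub
  linarith [hkey, hfin, ht0val]

theorem gradient_neg' {N : ℕ} (G : EuclideanSpace ℝ (Fin N) → ℝ) (x : EuclideanSpace ℝ (Fin N)) :
    gradient (fun y => -G y) x = -gradient G x := by
  rw [gradient, gradient, fderiv_fun_neg, map_neg]

theorem stmt4 {N : ℕ} (G : EuclideanSpace ℝ (Fin N) → ℝ)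
    (hdiff : Differentiable ℝ G) (hLip : LocallyLipschitz (gradient G))
    (ub : EuclideanSpace ℝ (Fin N)) (hub : gradient G ub = 0)
    (ε : ℝ) (hε : 0 < ε)
    (hcrit : ∀ u ∈ ball ub (2 * ε), G u = G ub → gradient G u = 0) :
    ∃ c > 0, ∀ u ∈ ball ub ε, c * ‖gradient G u‖ ^ 2 ≤ |G u - G ub| := by
  obtain ⟨K₀, hK₀⟩ := exists_lipschitzOnWith_of_locallyLipschitz hLip
    (isCompact_closedBall ub (2 * ε)) (convex_closedBall ub (2 * ε))
  set K : ℝ≥0 := max K₀ 1 with hKdef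
  have hK : LipschitzOnWith K (gradient G) (closedBall ub (2 * ε)) := by
    intro x hx y hy
    exact le_trans (hK₀ hx hy) (by
      gcongr
      exact_mod_cast le_max_left K₀ 1)
  have hKpos : 0 < (K : ℝ) := by
    have : (1 : ℝ≥0) ≤ K := le_max_right _ _
    exact_mod_cast lt_of_lt_of_le zero_lt_one this
  refine ⟨1 / (4 * K), by positivity, fun u hu => ?_⟩
  rcases eq_or_ne (gradient G u) 0 with h0 | hne
  · simp [h0, abs_nonneg]
  have huball : u ∈ ball ub (2 * ε) :=
    ball_subset_ball (by linarith) hu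
  have hGne : G u ≠ G ub := fun h => hne (hcrit u huball h)
  rcases hGne.lt_or_gt with hlt | hgt
  · -- G u < G ub : apply descent to -G
    set H : EuclideanSpace ℝ (Fin N) → ℝ := fun y => -G y with hH
    have hHdiff : Differentiable ℝ H := hdiff.neg
    have hHgrad : ∀ x, gradient H x = -gradient G x := fun x => gradient_neg' G x
    have hHub : gradient H ub = 0 := by rw [hHgrad, hub, neg_zero]
    have hHK : LipschitzOnWith K (gradient H) (closedBall ub (2 * ε)) := by
      intro x hx y hy
      have := hK hx hy
      simp only [hHgrad, edist_neg_neg]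
      exact this
    have hHcrit : ∀ v ∈ ball ub (2 * ε), H v = H ub → gradient H v = 0 := by
      intro v hv hVeq
      rw [hHgrad, hcrit v hv (by simpa [hH] using neg_injective hVeq), neg_zero]
    have hHne : gradient H u ≠ 0 := by
      rw [hHgrad]; simpa using hne
    have hHgt : H ub < H u := by simp [hH]; exact hlt
    have := descent_bound H hHdiff ub hHub ε hε K hHK hKpos hHcrit u hu hHne hHgt
    rw [hHgrad, norm_neg] at this
    have habs : |G u - G ub| = G ub - G u := by
      rw [abs_of_neg (by linarith)]; ring
    rw [habs]
    calc (1 / (4 * (K:ℝ))) * ‖gradient G u‖ ^ 2 ≤ H u - H ub := this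
      _ = G ub - G u := by simp [hH]; ring
  · have := descent_bound G hdiff ub hub ε hε K hK hKpos hcrit u hu hne hgt
    rwa [abs_of_pos (by linarith)]
end
end

section
/- Let G : ℝ^N → ℝ be twice continuously differentiable, r₀ > 0, and let u : (0, r₀) → ℝ^N be a C¹ curve with G(u(r)) = r for all r ∈ (0, r₀). Let λ : (0, r₀) → ℝ be continuous and λ̄ ≥ 0 be such that ∇²G(u(r))·∇G(u(r)) = λ(r)·∇G(u(r)) and λ(r) ≤ λ̄ for all r ∈ (0, r₀). Assume moreover there is a sequence rₙ ↓ 0 in (0, r₀) with ‖∇G(u(rₙ))‖ → 0. Then ‖∇G(u(r))‖² ≤ 2λ̄·r for all r ∈ (0, r₀). -/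
open Real Set Metric Filter Topology InnerProductSpace RealInnerProductSpace

noncomputable section

theorem stmt6 {N : ℕ} (G : EuclideanSpace ℝ (Fin N) → ℝ) (hG : ContDiff ℝ 2 G)
    (r₀ : ℝ) (hr₀ : 0 < r₀)
    (u u' : ℝ → EuclideanSpace ℝ (Fin N))
    (hu : ∀ r ∈ Ioo (0:ℝ) r₀, HasDerivAt u (u' r) r)
    (hu'c : ContinuousOn u' (Ioo 0 r₀))
    (hval : ∀ r ∈ Ioo (0:ℝ) r₀, G (u r) = r)
    (lam : ℝ → ℝ) (hlamc : ContinuousOn lam (Ioo 0 r₀))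
    (lamb : ℝ) (hlamb : 0 ≤ lamb)
    (heig : ∀ r ∈ Ioo (0:ℝ) r₀,
      fderiv ℝ (gradient G) (u r) (gradient G (u r)) = lam r • gradient G (u r))
    (hlamle : ∀ r ∈ Ioo (0:ℝ) r₀, lam r ≤ lamb)
    (rn : ℕ → ℝ) (hrnmem : ∀ n, rn n ∈ Ioo (0:ℝ) r₀) (hrnanti : Antitone rn)
    (hrn0 : Tendsto rn atTop (𝓝 0))
    (hgrad0 : Tendsto (fun n => ‖gradient G (u (rn n))‖) atTop (𝓝 0)) :
    ∀ r ∈ Ioo (0:ℝ) r₀, ‖gradient G (u r)‖ ^ 2 ≤ 2 * lamb * r := by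
  have hG1 : ContDiff ℝ 1 (fderiv ℝ G) := hG.fderiv_right (by norm_num)
  have hGdiff : Differentiable ℝ G := hG.differentiable (by norm_num)
  set L := ((toDual ℝ (EuclideanSpace ℝ (Fin N))).symm.toContinuousLinearEquiv.toContinuousLinearMap) with hL
  have hDgrad : ∀ x, HasFDerivAt (gradient G) (L.comp (fderiv ℝ (fderiv ℝ G) x)) x := by
    intro x
    exact L.hasFDerivAt.comp x (hG1.differentiable one_ne_zero x).hasFDerivAt
  -- inner product formula for fderiv of gradient
  have hform : ∀ x v w, ⟪fderiv ℝ (gradient G) x v, w⟫_ℝ = fderiv ℝ (fderiv ℝ G) x v w := by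
    intro x v w
    rw [(hDgrad x).fderiv]
    simp only [hL, ContinuousLinearMap.coe_comp', Function.comp_apply,
      ContinuousLinearEquiv.coe_coe, LinearIsometryEquiv.coe_toContinuousLinearEquiv]
    exact toDual_symm_apply
  have hsymm : ∀ x v w, ⟪fderiv ℝ (gradient G) x v, w⟫_ℝ = ⟪fderiv ℝ (gradient G) x w, v⟫_ℝ := by
    intro x v w
    rw [hform, hform]
    exact (hG.contDiffAt.isSymmSndFDerivAt (by simp [minSmoothness_of_isRCLikeNormedField])) v w
  -- gradient pairing with fderiv
  have hgradpair : ∀ x v, ⟪gradient G x, v⟫_ℝ = fderiv ℝ G x v := fun x v => toDual_symm_apply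
  -- inner product of gradient with u' is 1
  have hpair1 : ∀ r ∈ Ioo (0:ℝ) r₀, ⟪gradient G (u r), u' r⟫_ℝ = 1 := by
    intro r hr
    rw [hgradpair]
    have hA : HasDerivAt (fun s => G (u s)) (fderiv ℝ G (u r) (u' r)) r :=
      (hGdiff (u r)).hasFDerivAt.comp_hasDerivAt r (hu r hr)
    have hB : HasDerivAt (fun s => G (u s)) 1 r := by
      refine (hasDerivAt_id r).congr_of_eventuallyEq ?_
      filter_upwards [Ioo_mem_nhds hr.1 hr.2] with s hs
      exact hval s hs
    exact hA.unique hB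
  -- derivative of squared norm of gradient
  have hphi : ∀ r ∈ Ioo (0:ℝ) r₀,
      HasDerivAt (fun s => ‖gradient G (u s)‖ ^ 2) (2 * lam r) r := by
    intro r hr
    have hg : HasDerivAt (fun s => gradient G (u s))
        (fderiv ℝ (gradient G) (u r) (u' r)) r := by
      have h := (hDgrad (u r)).comp_hasDerivAt r (hu r hr)
      rw [(hDgrad (u r)).fderiv]
      exact h
    have hinner := hg.inner ℝ hg
    have heq : (fun s => ⟪gradient G (u s), gradient G (u s)⟫_ℝ)
        = fun s => ‖gradient G (u s)‖ ^ 2 := by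
      funext s; exact real_inner_self_eq_norm_sq _
    rw [heq] at hinner
    refine hinner.congr_deriv ?_
    have h1 : ⟪fderiv ℝ (gradient G) (u r) (u' r), gradient G (u r)⟫_ℝ = lam r := by
      rw [hsymm, heig r hr, real_inner_smul_left, hpair1 r hr, mul_one]
    have h2 : ⟪gradient G (u r), fderiv ℝ (gradient G) (u r) (u' r)⟫_ℝ = lam r := by
      rw [real_inner_comm]; exact h1
    rw [h1, h2]; ring
  -- monotonicity of psi
  set ψ : ℝ → ℝ := fun s => 2 * lamb * s - ‖gradient G (u s)‖ ^ 2 with hψdef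
  have hψ : ∀ r ∈ Ioo (0:ℝ) r₀, HasDerivAt ψ (2 * lamb - 2 * lam r) r := by
    intro r hr
    have := ((hasDerivAt_id r).const_mul (2 * lamb)).sub (hphi r hr)
    exact this.congr_deriv (by ring)
  have hmono : MonotoneOn ψ (Ioo 0 r₀) := by
    apply monotoneOn_of_deriv_nonneg (convex_Ioo 0 r₀)
    · intro x hx; exact (hψ x hx).continuousAt.continuousWithinAt
    · rw [interior_Ioo]; intro x hx; exact (hψ x hx).differentiableAt.differentiableWithinAt
    · rw [interior_Ioo]; intro x hx
      rw [(hψ x hx).deriv]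
      nlinarith [hlamle x hx]
  -- conclusion
  intro r hr
  have hev : ∀ᶠ n in atTop, rn n ≤ r := by
    filter_upwards [hrn0.eventually_lt_const hr.1] with n hn
    exact hn.le
  have hle : ∀ᶠ n in atTop,
      ‖gradient G (u r)‖ ^ 2 ≤ 2 * lamb * r - 2 * lamb * rn n + ‖gradient G (u (rn n))‖ ^ 2 := by
    filter_upwards [hev] with n hn
    have := hmono (hrnmem n) hr hn
    simp only [hψdef] at this
    linarith
  have hlim : Tendsto (fun n => 2 * lamb * r - 2 * lamb * rn n + ‖gradient G (u (rn n))‖ ^ 2)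
      atTop (𝓝 (2 * lamb * r)) := by
    have h1 : Tendsto (fun n => 2 * lamb * rn n) atTop (𝓝 0) := by
      simpa using (hrn0.const_mul (2 * lamb))
    have h2 : Tendsto (fun n => ‖gradient G (u (rn n))‖ ^ 2) atTop (𝓝 0) := by
      simpa using hgrad0.pow 2
    simpa using (tendsto_const_nhds.sub h1).add h2
  exact ge_of_tendsto hlim hle
end
end

section
/- Let F : ℝ^N → ℝ^N be locally Lipschitz and let E : ℝ^N → ℝ be continuously differentiable. Assume F is quasi-gradient for E on all of ℝ^N with angle constant α > 0, and that E has the KL property at every point of ℝ^N. Let u : [0, ∞) → ℝ^N solve u′(t) + F(u(t)) = 0 with u(0) = u₀. Then either ‖u(t)‖ → +∞ as t → +∞, or u(t) converges as t → +∞ to some point u∞ with F(u∞) = 0. Moreover, in the convergent case, u′ is integrable on (0, ∞), u′(t) → 0 as t → ∞, and for every desingularizing function φ of E at u∞ one has ‖u(t) − u∞‖ ≤ (1/α)·φ(E(u(t)) − E(u∞)) for all sufficiently large t. -/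
open Real Set Metric Filter Topology MeasureTheory RealInnerProductSpace

noncomputable section

/-- `φ` is a desingularizing function of `E` at `ub` on `B(ub, η)`, with domain `[0, r₀)`. -/
def DesingOn {N : ℕ} (E : EuclideanSpace ℝ (Fin N) → ℝ) (ub : EuclideanSpace ℝ (Fin N))
    (η r₀ : ℝ) (φ : ℝ → ℝ) : Prop :=
  0 < r₀ ∧ 0 < η ∧ φ 0 = 0 ∧ (∀ s ∈ Set.Ico (0:ℝ) r₀, 0 ≤ φ s) ∧
  ContinuousOn φ (Set.Ico 0 r₀) ∧
  (∀ s ∈ Set.Ioo (0:ℝ) r₀, DifferentiableAt ℝ φ s) ∧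
  ContinuousOn (deriv φ) (Set.Ioo 0 r₀) ∧
  (∀ s ∈ Set.Ioo (0:ℝ) r₀, 0 < deriv φ s) ∧
  (∀ u ∈ Metric.ball ub η, |E u - E ub| < r₀) ∧
  (∀ u ∈ Metric.ball ub η, E u ≠ E ub →
    1 ≤ deriv φ (|E u - E ub|) * ‖gradient E u‖)

/-- `E` has the KL property at `ub`. -/
def KLAt {N : ℕ} (E : EuclideanSpace ℝ (Fin N) → ℝ) (ub : EuclideanSpace ℝ (Fin N)) : Prop :=
  ∃ η r₀ φ, DesingOn E ub η r₀ φ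

section aux
variable {N : ℕ} {F : EuclideanSpace ℝ (Fin N) → EuclideanSpace ℝ (Fin N)}
  {E : EuclideanSpace ℝ (Fin N) → ℝ} {α : ℝ}
  {u : ℝ → EuclideanSpace ℝ (Fin N)}
  {ub : EuclideanSpace ℝ (Fin N)} {η r₀ : ℝ} {φ : ℝ → ℝ}

lemma u_cont (hode : ∀ t ≥ (0:ℝ), HasDerivAt u (-(F (u t))) t) :
    ContinuousOn u (Ici 0) :=
  fun t ht => ((hode t ht).continuousAt).continuousWithinAt

lemma grad_cont (hE : ContDiff ℝ 1 E) : Continuous (fun x => gradient E x) := by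
  have h := hE.continuous_fderiv one_ne_zero
  unfold gradient
  exact (InnerProductSpace.toDual ℝ (EuclideanSpace ℝ (Fin N))).symm.continuous.comp h

lemma Eu_deriv (hE : ContDiff ℝ 1 E) (hode : ∀ t ≥ (0:ℝ), HasDerivAt u (-(F (u t))) t)
    {t : ℝ} (ht : 0 ≤ t) :
    HasDerivAt (fun s => E (u s)) (-⟪gradient E (u t), F (u t)⟫) t := by
  have hd : DifferentiableAt ℝ E (u t) := (hE.differentiable one_ne_zero) (u t)
  have hg := hd.hasGradientAt
  rw [hasGradientAt_iff_hasFDerivAt] at hg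
  have := hg.comp_hasDerivAt t (hode t ht)
  simp [InnerProductSpace.toDual_apply_apply, inner_neg_right] at this ⊢
  exact this

lemma inner_nn (hα : 0 < α)
    (hangle : ∀ x, α * (‖gradient E x‖ * ‖F x‖) ≤ ⟪gradient E x, F x⟫) (x) :
    0 ≤ ⟪gradient E x, F x⟫ :=
  le_trans (by positivity) (hangle x)

lemma E_anti (hE : ContDiff ℝ 1 E) (hα : 0 < α)
    (hangle : ∀ x, α * (‖gradient E x‖ * ‖F x‖) ≤ ⟪gradient E x, F x⟫)
    (hode : ∀ t ≥ (0:ℝ), HasDerivAt u (-(F (u t))) t) :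
    AntitoneOn (fun t => E (u t)) (Ici 0) := by
  apply antitoneOn_of_deriv_nonpos (convex_Ici 0)
  · exact hE.continuous.comp_continuousOn (u_cont hode)
  · intro x hx
    rw [interior_Ici] at hx
    exact (Eu_deriv hE hode hx.le).differentiableAt.differentiableWithinAt
  · intro x hx
    rw [interior_Ici] at hx
    rw [(Eu_deriv hE hode hx.le).deriv]
    simpa using inner_nn hα hangle (u x)

lemma key_pos (hF : LocallyLipschitz F) (hE : ContDiff ℝ 1 E) (hα : 0 < α)
    (hangle : ∀ x, α * (‖gradient E x‖ * ‖F x‖) ≤ ⟪gradient E x, F x⟫)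
    (hode : ∀ t ≥ (0:ℝ), HasDerivAt u (-(F (u t))) t)
    (hφ : DesingOn E ub η r₀ φ) {a b : ℝ} (ha : 0 ≤ a) (hab : a ≤ b)
    (hball : ∀ s ∈ Icc a b, u s ∈ Metric.ball ub η)
    (hpos : 0 < E (u b) - E ub) :
    α * ∫ s in a..b, ‖F (u s)‖ ≤ φ (E (u a) - E ub) - φ (E (u b) - E ub) := by
  obtain ⟨hr₀, hη, hφ0, hφnn, hφcont, hφdiff, hφdcont, hφdpos, hballr, hKLin⟩ := hφ
  set r : ℝ → ℝ := fun s => E (u s) - E ub with hrdef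
  have hanti := E_anti hE hα hangle hode
  have hrIoo : ∀ s ∈ Icc a b, r s ∈ Ioo 0 r₀ := by
    intro s hs
    constructor
    · exact lt_of_lt_of_le hpos (sub_le_sub_right
        (hanti (le_trans ha hs.1 : (0:ℝ) ≤ s) (le_trans ha hab) hs.2) _)
    · exact lt_of_le_of_lt (le_abs_self _) (hballr _ (hball s hs))
  have hrderiv : ∀ s ∈ Icc a b, HasDerivAt r (-⟪gradient E (u s), F (u s)⟫) s :=
    fun s hs => (Eu_deriv hE hode (le_trans ha hs.1)).sub_const _
  have hhd : ∀ s ∈ Icc a b,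
      HasDerivAt (fun x => φ (r x)) (deriv φ (r s) * (-⟪gradient E (u s), F (u s)⟫)) s :=
    fun s hs => ((hφdiff _ (hrIoo s hs)).hasDerivAt).comp s (hrderiv s hs)
  have hucont : ContinuousOn u (Icc a b) :=
    (u_cont hode).mono (fun s hs => le_trans ha hs.1)
  have hrcont : ContinuousOn r (Icc a b) :=
    (hE.continuous.comp_continuousOn hucont).sub continuousOn_const
  have hFcont : ContinuousOn (fun s => F (u s)) (Icc a b) :=
    hF.continuous.comp_continuousOn hucont
  have hgcont : ContinuousOn (fun s => gradient E (u s)) (Icc a b) :=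
    (grad_cont hE).comp_continuousOn hucont
  have hinner : ContinuousOn (fun s => ⟪gradient E (u s), F (u s)⟫) (Icc a b) :=
    hgcont.inner hFcont
  have hdφr : ContinuousOn (fun s => deriv φ (r s)) (Icc a b) :=
    hφdcont.comp hrcont (fun s hs => hrIoo s hs)
  have hh'cont : ContinuousOn
      (fun s => deriv φ (r s) * (-⟪gradient E (u s), F (u s)⟫)) (Icc a b) :=
    hdφr.mul hinner.neg
  have hint1 : IntervalIntegrable
      (fun s => deriv φ (r s) * (-⟪gradient E (u s), F (u s)⟫)) volume a b := by
    apply ContinuousOn.intervalIntegrable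
    rwa [uIcc_of_le hab]
  have hint2 : IntervalIntegrable (fun s => α * ‖F (u s)‖) volume a b := by
    apply ContinuousOn.intervalIntegrable
    rw [uIcc_of_le hab]
    exact continuousOn_const.mul hFcont.norm
  have hFTC : (∫ s in a..b, deriv φ (r s) * (-⟪gradient E (u s), F (u s)⟫))
      = φ (r b) - φ (r a) := by
    apply intervalIntegral.integral_eq_sub_of_hasDerivAt
    · intro s hs
      exact hhd s (by rwa [uIcc_of_le hab] at hs)
    · exact hint1
  have hptwise : ∀ s ∈ Icc a b,
      α * ‖F (u s)‖ ≤ -(deriv φ (r s) * (-⟪gradient E (u s), F (u s)⟫)) := by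
    intro s hs
    have hrs := hrIoo s hs
    have hKL : 1 ≤ deriv φ (r s) * ‖gradient E (u s)‖ := by
      have hne : E (u s) ≠ E ub := by
        intro h
        simp only [hrdef, h, sub_self] at hrs
        exact lt_irrefl 0 hrs.1
      have := hKLin (u s) (hball s hs) hne
      rwa [abs_of_pos hrs.1] at this
    have hd := hφdpos _ hrs
    have hang := hangle (u s)
    have hFnn : (0:ℝ) ≤ ‖F (u s)‖ := norm_nonneg _
    have hgnn : (0:ℝ) ≤ ‖gradient E (u s)‖ := norm_nonneg _
    rw [mul_neg, neg_neg]
    nlinarith [mul_le_mul_of_nonneg_left hang hd.le,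
      mul_le_mul_of_nonneg_right hKL (mul_nonneg hα.le hFnn)]
  calc α * ∫ s in a..b, ‖F (u s)‖ = ∫ s in a..b, α * ‖F (u s)‖ := by
        rw [intervalIntegral.integral_const_mul]
    _ ≤ ∫ s in a..b, -(deriv φ (r s) * (-⟪gradient E (u s), F (u s)⟫)) := by
        apply intervalIntegral.integral_mono_on hab hint2 hint1.neg hptwise
    _ = -(φ (r b) - φ (r a)) := by rw [intervalIntegral.integral_neg, hFTC]
    _ = φ (r a) - φ (r b) := by ring

lemma key (hF : LocallyLipschitz F) (hE : ContDiff ℝ 1 E) (hα : 0 < α)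
    (hangle : ∀ x, α * (‖gradient E x‖ * ‖F x‖) ≤ ⟪gradient E x, F x⟫)
    (hrest : ∀ x, gradient E x = 0 ↔ F x = 0)
    (hode : ∀ t ≥ (0:ℝ), HasDerivAt u (-(F (u t))) t)
    (hφ : DesingOn E ub η r₀ φ) {a b : ℝ} (ha : 0 ≤ a) (hab : a ≤ b)
    (hball : ∀ s ∈ Icc a b, u s ∈ Metric.ball ub η)
    (hnn : 0 ≤ E (u b) - E ub) :
    α * ∫ s in a..b, ‖F (u s)‖ ≤ φ (E (u a) - E ub) - φ (E (u b) - E ub) := by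
  by_cases hpos : 0 < E (u b) - E ub
  · exact key_pos hF hE hα hangle hode hφ ha hab hball hpos
  have hrb : E (u b) - E ub = 0 := le_antisymm (not_lt.1 hpos) hnn
  obtain ⟨hr₀, hη, hφ0, hφnn, hφcont, hφdiff, hφdcont, hφdpos, hballr, hKLin⟩ := hφ
  have hanti := E_anti hE hα hangle hode
  set r : ℝ → ℝ := fun s => E (u s) - E ub with hrdef
  have hrmono : ∀ s ∈ Icc a b, ∀ t ∈ Icc a b, s ≤ t → r t ≤ r s := by
    intro s hs t ht hst
    exact sub_le_sub_right (hanti (le_trans ha hs.1 : (0:ℝ) ≤ s) (le_trans ha ht.1) hst) _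
  have hrnn : ∀ s ∈ Icc a b, 0 ≤ r s := by
    intro s hs
    have h := hrmono s hs b ⟨hab, le_rfl⟩ hs.2
    have hrb' : r b = 0 := hrb
    linarith
  have hrlt : ∀ s ∈ Icc a b, r s < r₀ := fun s hs =>
    lt_of_le_of_lt (le_abs_self _) (hballr _ (hball s hs))
  have hucont : ContinuousOn u (Icc a b) :=
    (u_cont hode).mono (fun s hs => le_trans ha hs.1)
  have hrcont : ContinuousOn r (Icc a b) :=
    (hE.continuous.comp_continuousOn hucont).sub continuousOn_const
  have hFcont : ContinuousOn (fun s => ‖F (u s)‖) (Icc a b) :=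
    (hF.continuous.comp_continuousOn hucont).norm
  -- the set where r vanishes
  set S : Set ℝ := Icc a b ∩ r ⁻¹' {0} with hSdef
  have hbS : b ∈ S := ⟨⟨hab, le_rfl⟩, by simpa using hrb⟩
  have hSclosed : IsClosed S := hrcont.preimage_isClosed_of_isClosed isClosed_Icc isClosed_singleton
  have hSbdd : BddBelow S := ⟨a, fun x hx => hx.1.1⟩
  set c : ℝ := sInf S with hcdef
  have hcS : c ∈ S := hSclosed.csInf_mem ⟨b, hbS⟩ hSbdd
  have hac : a ≤ c := hcS.1.1
  have hcb : c ≤ b := hcS.1.2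
  have hrc : r c = 0 := hcS.2
  have hApos : ∀ s ∈ Icc a b, s < c → 0 < r s := by
    intro s hs hsc
    rcases lt_or_eq_of_le (hrnn s hs) with h | h
    · exact h
    · exact absurd (csInf_le hSbdd ⟨hs, h.symm⟩) (not_le.2 hsc)
  have hrzero : ∀ s ∈ Icc c b, r s = 0 := by
    intro s hs
    have h1 : r s ≤ r c := hrmono c hcS.1 s ⟨le_trans hac hs.1, hs.2⟩ hs.1
    have h2 : 0 ≤ r s := hrnn s ⟨le_trans hac hs.1, hs.2⟩
    rw [hrc] at h1
    linarith
  -- F vanishes on (c, b)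
  have hFzero : ∀ s ∈ Ioo c b, F (u s) = 0 := by
    intro s hs
    have h1 : HasDerivAt r (-⟪gradient E (u s), F (u s)⟫) s :=
      (Eu_deriv hE hode (le_trans ha (le_trans hac hs.1.le))).sub_const _
    have h2 : HasDerivAt r 0 s := by
      apply (hasDerivAt_const s (0:ℝ)).congr_of_eventuallyEq
      filter_upwards [isOpen_Ioo.mem_nhds hs] with x hx
      exact hrzero x ⟨hx.1.le, hx.2.le⟩
    have h3 : ⟪gradient E (u s), F (u s)⟫ = 0 := by
      have := h1.unique h2
      linarith [this]
    have h4 := hangle (u s)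
    rw [h3] at h4
    have h5 : ‖gradient E (u s)‖ * ‖F (u s)‖ = 0 := by
      have hge : 0 ≤ ‖gradient E (u s)‖ * ‖F (u s)‖ := by positivity
      nlinarith
    rcases mul_eq_zero.1 h5 with h | h
    · exact (hrest (u s)).1 (norm_eq_zero.1 h)
    · exact norm_eq_zero.1 h
  have hIntAB : ∀ x y, a ≤ x → x ≤ y → y ≤ b → IntervalIntegrable (fun s => ‖F (u s)‖) volume x y := by
    intro x y hx hxy hy
    apply ContinuousOn.intervalIntegrable
    apply hFcont.mono
    intro z hz
    rw [uIcc_of_le hxy] at hz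
    exact ⟨le_trans hx hz.1, le_trans hz.2 hy⟩
  have hIcb : (∫ s in c..b, ‖F (u s)‖) = 0 := by
    have hae : ∀ᵐ x, x ∈ Set.uIoc c b → ‖F (u x)‖ = 0 := by
      have hb' : ∀ᵐ x : ℝ, x ≠ b := by
        rw [ae_iff]; simpa using measure_singleton b
      filter_upwards [hb'] with x hx hmem
      rw [uIoc_of_le hcb] at hmem
      rw [hFzero x ⟨hmem.1, lt_of_le_of_ne hmem.2 hx⟩, norm_zero]
    rw [intervalIntegral.integral_congr_ae hae, intervalIntegral.integral_zero]
  -- bound on [a, c]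
  have hIac : α * (∫ s in a..c, ‖F (u s)‖) ≤ φ (r a) := by
    rcases eq_or_lt_of_le hac with heq | hlt
    · rw [← heq]
      simp only [intervalIntegral.integral_same, mul_zero]
      rw [← heq] at hrc
      exact hφnn _ ⟨le_of_eq hrc.symm, by rw [hrc]; exact hr₀⟩
    · apply le_of_forall_pos_le_add
      intro ε hε
      obtain ⟨M, hM⟩ := isCompact_Icc.exists_bound_of_continuousOn hFcont
      set M' : ℝ := max M 0 with hM'def
      have hM'nn : 0 ≤ M' := le_max_right _ _
      have hMbd : ∀ s ∈ Icc a b, ‖F (u s)‖ ≤ M' := by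
        intro s hs
        calc ‖F (u s)‖ ≤ ‖‖F (u s)‖‖ := le_abs_self _
          _ ≤ M := hM s hs
          _ ≤ M' := le_max_left _ _
      set δ : ℝ := min (c - a) (ε / (α * M' + 1)) with hδdef
      have hδpos : 0 < δ := lt_min (by linarith) (div_pos hε (by positivity))
      set b' : ℝ := c - δ with hb'def
      have hab' : a ≤ b' := by
        have : δ ≤ c - a := min_le_left _ _
        simp only [hb'def]; linarith
      have hb'c : b' < c := by simp only [hb'def]; linarith
      have hb'Icc : b' ∈ Icc a b := ⟨hab', le_trans hb'c.le hcb⟩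
      have hrb' : 0 < r b' := hApos b' hb'Icc hb'c
      have hkp := key_pos hF hE hα hangle hode
        ⟨hr₀, hη, hφ0, hφnn, hφcont, hφdiff, hφdcont, hφdpos, hballr, hKLin⟩
        ha hab' (fun s hs => hball s ⟨hs.1, le_trans hs.2 hb'Icc.2⟩) hrb'
      have hφb' : 0 ≤ φ (r b') := hφnn _ ⟨(hrb').le, hrlt b' hb'Icc⟩
      have hsplit : (∫ s in a..c, ‖F (u s)‖)
          = (∫ s in a..b', ‖F (u s)‖) + ∫ s in b'..c, ‖F (u s)‖ :=
        (intervalIntegral.integral_add_adjacent_intervals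
          (hIntAB a b' le_rfl hab' hb'Icc.2) (hIntAB b' c hab' hb'c.le hcb)).symm
      have htail : (∫ s in b'..c, ‖F (u s)‖) ≤ M' * δ := by
        have := intervalIntegral.norm_integral_le_of_norm_le_const
          (f := fun s => ‖F (u s)‖) (a := b') (b := c) (C := M') ?_
        · calc (∫ s in b'..c, ‖F (u s)‖) ≤ ‖∫ s in b'..c, ‖F (u s)‖‖ := le_abs_self _
            _ ≤ M' * |c - b'| := this
            _ = M' * δ := by rw [abs_of_pos (by linarith : (0:ℝ) < c - b')]; rw [hb'def]; ring
        · intro x hx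
          rw [uIoc_of_le hb'c.le] at hx
          rw [norm_norm]
          exact hMbd x ⟨le_trans hab' hx.1.le, le_trans hx.2 hcb⟩
      have hδε : α * (M' * δ) ≤ ε := by
        have h1 : δ ≤ ε / (α * M' + 1) := min_le_right _ _
        have h2 : α * M' * δ ≤ α * M' * (ε / (α * M' + 1)) := by
          apply mul_le_mul_of_nonneg_left h1 (by positivity)
        have h3 : α * M' * (ε / (α * M' + 1)) ≤ ε := by
          have hpos1 : (0:ℝ) < α * M' + 1 := by positivity
          calc α * M' * (ε / (α * M' + 1)) ≤ (α * M' + 1) * (ε / (α * M' + 1)) :=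
              mul_le_mul_of_nonneg_right (by linarith) (div_nonneg hε.le hpos1.le)
            _ = ε := by field_simp
        calc α * (M' * δ) = α * M' * δ := by ring
          _ ≤ ε := le_trans h2 h3
      calc α * ∫ s in a..c, ‖F (u s)‖
          = α * (∫ s in a..b', ‖F (u s)‖) + α * ∫ s in b'..c, ‖F (u s)‖ := by
            rw [hsplit]; ring
        _ ≤ (φ (r a) - φ (r b')) + α * (M' * δ) := by
            apply add_le_add hkp
            exact mul_le_mul_of_nonneg_left htail hα.le
        _ ≤ φ (r a) + ε := by linarith [hδε, hφb']
  have htotal : (∫ s in a..b, ‖F (u s)‖) = ∫ s in a..c, ‖F (u s)‖ := by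
    rw [← intervalIntegral.integral_add_adjacent_intervals
      (hIntAB a c le_rfl hac hcb) (hIntAB c b hac hcb le_rfl), hIcb, add_zero]
  rw [htotal]
  have : φ (E (u b) - E ub) = 0 := by rw [hrb, hφ0]
  rw [this, sub_zero]
  exact hIac

lemma dist_le (hF : LocallyLipschitz F)
    (hode : ∀ t ≥ (0:ℝ), HasDerivAt u (-(F (u t))) t)
    {a b : ℝ} (ha : 0 ≤ a) (hab : a ≤ b) :
    ‖u b - u a‖ ≤ ∫ s in a..b, ‖F (u s)‖ := by
  have hucont := u_cont (F := F) hode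
  have hcont : ContinuousOn (fun s => -(F (u s))) (Icc a b) :=
    ((hF.continuous.comp_continuousOn (hucont.mono (fun z hz => le_trans ha hz.1)))).neg
  have hint : IntervalIntegrable (fun s => -(F (u s))) volume a b := by
    apply ContinuousOn.intervalIntegrable
    rwa [uIcc_of_le hab]
  have hftc : (∫ s in a..b, -(F (u s))) = u b - u a := by
    apply intervalIntegral.integral_eq_sub_of_hasDerivAt _ hint
    intro s hs
    rw [uIcc_of_le hab] at hs
    exact hode s (le_trans ha hs.1)
  calc ‖u b - u a‖ = ‖∫ s in a..b, -(F (u s))‖ := by rw [hftc]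
    _ ≤ ∫ s in a..b, ‖-(F (u s))‖ := intervalIntegral.norm_integral_le_integral_norm hab
    _ = ∫ s in a..b, ‖F (u s)‖ := by simp only [norm_neg]

end aux

theorem stmt7 {N : ℕ} (F : EuclideanSpace ℝ (Fin N) → EuclideanSpace ℝ (Fin N))
    (hF : LocallyLipschitz F)
    (E : EuclideanSpace ℝ (Fin N) → ℝ) (hE : ContDiff ℝ 1 E)
    (α : ℝ) (hα : 0 < α)
    (hangle : ∀ u, α * (‖gradient E u‖ * ‖F u‖) ≤ ⟪gradient E u, F u⟫)
    (hrest : ∀ u, gradient E u = 0 ↔ F u = 0)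
    (hKL : ∀ x, KLAt E x)
    (u : ℝ → EuclideanSpace ℝ (Fin N)) (u₀ : EuclideanSpace ℝ (Fin N)) (hu0 : u 0 = u₀)
    (hode : ∀ t ≥ (0:ℝ), HasDerivAt u (-(F (u t))) t) :
    Tendsto (fun t => ‖u t‖) atTop atTop ∨
    ∃ uinf, F uinf = 0 ∧ Tendsto u atTop (𝓝 uinf) ∧
      IntegrableOn (fun t => -(F (u t))) (Ioi 0) ∧
      Tendsto (fun t => -(F (u t))) atTop (𝓝 0) ∧
      ∀ η r₀ φ, DesingOn E uinf η r₀ φ →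
        ∀ᶠ t in atTop, ‖u t - uinf‖ ≤ (1 / α) * φ (E (u t) - E uinf) := by
  by_cases hdiv : Tendsto (fun t => ‖u t‖) atTop atTop
  · exact Or.inl hdiv
  right
  have hanti := E_anti hE hα hangle hode
  have hucont := u_cont (F := F) hode
  -- extract a bounded sequence
  have hfreq : ∃ b₀ : ℝ, ∃ᶠ τ in atTop, ‖u τ‖ < b₀ := by
    rw [Filter.tendsto_atTop] at hdiv
    push_neg at hdiv
    obtain ⟨b₀, hb₀⟩ := hdiv
    exact ⟨b₀, by simpa [not_le] using (Filter.not_eventually.1 hb₀)⟩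
  obtain ⟨b₀, hfreq⟩ := hfreq
  have hseq : ∀ n : ℕ, ∃ x, x ≥ (n:ℝ) ∧ ‖u x‖ < b₀ := by
    intro n
    obtain ⟨x, hx1, hx2⟩ := (frequently_atTop.1 hfreq) (n:ℝ)
    exact ⟨x, hx1, hx2⟩
  choose t₀ ht₀ge ht₀lt using hseq
  have hmem : ∀ n, u (t₀ n) ∈ closedBall (0 : EuclideanSpace ℝ (Fin N)) b₀ := fun n => by
    simpa [mem_closedBall, dist_zero_right] using (ht₀lt n).le
  obtain ⟨ub, -, ψ, hψ, hconv⟩ :=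
    (isCompact_closedBall (0 : EuclideanSpace ℝ (Fin N)) b₀).tendsto_subseq hmem
  set s' : ℕ → ℝ := fun n => t₀ (ψ n) with hs'def
  have hs'ge : ∀ n : ℕ, (n:ℝ) ≤ s' n := fun n =>
    le_trans (Nat.cast_le.2 hψ.le_apply) (ht₀ge (ψ n))
  have hs'top : Tendsto s' atTop atTop :=
    tendsto_atTop_mono hs'ge tendsto_natCast_atTop_atTop
  have hs'nn : ∀ n, (0:ℝ) ≤ s' n := fun n => le_trans (Nat.cast_nonneg n) (hs'ge n)
  have hconv' : Tendsto (fun n => u (s' n)) atTop (𝓝 ub) := hconv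
  have hEc : Tendsto (fun n => E (u (s' n))) atTop (𝓝 (E ub)) :=
    (hE.continuous.tendsto ub).comp hconv'
  -- E (u τ) ≥ E ub for τ ≥ 0
  have hge : ∀ τ, 0 ≤ τ → E ub ≤ E (u τ) := by
    intro τ hτ
    have hev : ∀ᶠ n in atTop, E (u (s' n)) ≤ E (u τ) := by
      filter_upwards [hs'top.eventually_ge_atTop τ] with n hn
      exact hanti hτ (le_trans hτ hn) hn
    exact le_of_tendsto hEc hev
  have hElim : Tendsto (fun τ => E (u τ)) atTop (𝓝 (E ub)) := by
    rw [tendsto_order]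
    constructor
    · intro y hy
      filter_upwards [eventually_ge_atTop (0:ℝ)] with τ hτ
      exact lt_of_lt_of_le hy (hge τ hτ)
    · intro y hy
      obtain ⟨n, hn⟩ := (hEc.eventually_lt_const hy).exists
      filter_upwards [eventually_ge_atTop (s' n)] with τ hτ
      exact lt_of_le_of_lt (hanti (hs'nn n) (le_trans (hs'nn n) hτ) hτ) hn
  -- KL data at ub
  obtain ⟨η, r₀, φ, hφall⟩ := hKL ub
  obtain ⟨hr₀, hη, hφ0, hφnn, hφcont, hφdiff, hφdcont, hφdpos, hballr, hKLin⟩ := hφall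
  have hφall : DesingOn E ub η r₀ φ :=
    ⟨hr₀, hη, hφ0, hφnn, hφcont, hφdiff, hφdcont, hφdpos, hballr, hKLin⟩
  set r : ℝ → ℝ := fun τ => E (u τ) - E ub with hrdef
  have hrto0 : Tendsto r atTop (𝓝 0) := by
    have := hElim.sub_const (E ub)
    simpa using this
  have hφr : Tendsto (fun τ => φ (r τ)) atTop (𝓝 0) := by
    have h1 : Tendsto r atTop (𝓝[Ico 0 r₀] 0) := by
      rw [tendsto_nhdsWithin_iff]
      refine ⟨hrto0, ?_⟩
      filter_upwards [eventually_ge_atTop (0:ℝ), hrto0.eventually_lt_const hr₀] with τ h1 h2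
      exact ⟨sub_nonneg.2 (hge τ h1), h2⟩
    have h2 : ContinuousWithinAt φ (Ico 0 r₀) 0 := hφcont 0 ⟨le_rfl, hr₀⟩
    have h3 := h2.tendsto.comp h1
    rwa [hφ0] at h3
  -- pick the trapping time t₁
  have hev1 : ∀ᶠ n in atTop, u (s' n) ∈ ball ub (η/3) :=
    hconv'.eventually_mem (ball_mem_nhds ub (by linarith))
  have hev2 : ∀ᶠ n in atTop, (1/α) * φ (r (s' n)) < η/3 := by
    have h3 : Tendsto (fun n => (1/α) * φ (r (s' n))) atTop (𝓝 ((1/α) * 0)) :=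
      ((hφr.comp hs'top).const_mul (1/α))
    rw [mul_zero] at h3
    exact h3.eventually_lt_const (by linarith)
  obtain ⟨n₁, hn₁ball, hn₁φ⟩ := (hev1.and hev2).exists
  set t₁ : ℝ := s' n₁ with ht₁def
  have ht₁0 : 0 ≤ t₁ := hs'nn n₁
  have hd1 : dist (u t₁) ub < η/3 := mem_ball.1 hn₁ball
  -- combined distance estimate
  have hdistle : ∀ x y, 0 ≤ x → x ≤ y → (∀ z ∈ Icc x y, u z ∈ ball ub η) →
      ‖u y - u x‖ ≤ (1/α) * (φ (r x) - φ (r y)) := by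
    intro x y hx hxy hb
    have hkey := key hF hE hα hangle hrest hode hφall hx hxy hb
      (sub_nonneg.2 (hge y (le_trans hx hxy)))
    have hd := dist_le hF hode hx hxy
    have h2 : (∫ s in x..y, ‖F (u s)‖) ≤ (φ (r x) - φ (r y))/α := by
      rw [le_div_iff₀ hα, mul_comm]
      exact hkey
    rw [one_div_mul_eq_div]
    linarith
  have hrIco : ∀ τ, 0 ≤ τ → u τ ∈ ball ub η → r τ ∈ Ico 0 r₀ := by
    intro τ hτ hb
    exact ⟨sub_nonneg.2 (hge τ hτ), lt_of_le_of_lt (le_abs_self _) (hballr _ hb)⟩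
  have hφt₁nn : 0 ≤ φ (r t₁) :=
    hφnn _ (hrIco t₁ ht₁0 (mem_ball.2 (by linarith)))
  -- trapping
  have htrap : ∀ τ, t₁ ≤ τ → dist (u τ) ub ≤ 2*η/3 := by
    intro τ₀ hτ₀
    set s : Set ℝ := {τ | ∀ z ∈ Icc t₁ τ, dist (u z) ub ≤ 2*η/3} with hsdef
    have hstrict : ∀ τ ∈ s, t₁ ≤ τ → ∀ z ∈ Icc t₁ τ, dist (u z) ub < 2*η/3 := by
      intro τ hτs hτ z hz
      have hballz : ∀ w ∈ Icc t₁ z, u w ∈ ball ub η := by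
        intro w hw
        have := hτs w ⟨hw.1, le_trans hw.2 hz.2⟩
        rw [mem_ball]
        linarith
      have hle := hdistle t₁ z ht₁0 hz.1 hballz
      have hφrz : 0 ≤ φ (r z) :=
        hφnn _ (hrIco z (le_trans ht₁0 hz.1) (hballz z ⟨hz.1, le_rfl⟩))
      have h1 : ‖u z - u t₁‖ < η/3 := by
        have h2 : (1/α) * (φ (r t₁) - φ (r z)) ≤ (1/α) * φ (r t₁) := by
          apply mul_le_mul_of_nonneg_left _ (by positivity)
          linarith
        calc ‖u z - u t₁‖ ≤ (1/α) * (φ (r t₁) - φ (r z)) := hle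
          _ ≤ (1/α) * φ (r t₁) := h2
          _ < η/3 := hn₁φ
      calc dist (u z) ub ≤ dist (u z) (u t₁) + dist (u t₁) ub := dist_triangle _ _ _
        _ < η/3 + η/3 := by
            apply add_lt_add _ hd1
            rw [dist_eq_norm]
            exact h1
        _ ≤ 2*η/3 := by linarith
    have ht₁s : t₁ ∈ s := by
      intro z hz
      have hzeq : z = t₁ := le_antisymm hz.2 hz.1
      rw [hzeq]
      linarith [hd1]
    have hsub : Icc t₁ τ₀ ⊆ s := by
      apply IsClosed.Icc_subset_of_forall_exists_gt _ ht₁s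
      · rintro x ⟨hxs, hxI⟩ y hy
        have hx0 : 0 ≤ x := le_trans ht₁0 hxI.1
        have hstrictx : dist (u x) ub < 2*η/3 := hstrict x hxs hxI.1 x ⟨hxI.1, le_rfl⟩
        have hcx : ContinuousAt (fun w => dist (u w) ub) x :=
          (hode x hx0).continuousAt.dist continuousAt_const
        have hevx : ∀ᶠ w in 𝓝 x, dist (u w) ub < 2*η/3 :=
          hcx.tendsto.eventually_lt_const hstrictx
        obtain ⟨δ, hδ, hball'⟩ := Metric.eventually_nhds_iff.1 hevx
        refine ⟨min y (x + δ/2), ⟨?_, ?_, min_le_left _ _⟩⟩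
        · intro z hz
          rcases le_or_gt z x with h | h
          · exact hxs z ⟨hz.1, h⟩
          · have hzle : z ≤ x + δ/2 := le_trans hz.2 (min_le_right _ _)
            have hdz : dist z x < δ := by
              rw [Real.dist_eq, abs_of_pos (by linarith : (0:ℝ) < z - x)]
              linarith
            exact (hball' hdz).le
        · exact lt_min (mem_Ioi.1 hy) (by linarith)
      · apply IsSeqClosed.isClosed
        intro xs τ hxs hlim
        have hτIcc : τ ∈ Icc t₁ τ₀ :=
          isClosed_Icc.mem_of_tendsto hlim (Eventually.of_forall fun n => (hxs n).2)
        refine ⟨?_, hτIcc⟩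
        intro z hz
        rcases eq_or_lt_of_le hz.2 with heq | hlt
        · have hcontτ : ContinuousAt (fun w => dist (u w) ub) τ :=
            (hode τ (le_trans ht₁0 hτIcc.1)).continuousAt.dist continuousAt_const
          have h4 : Tendsto (fun n => dist (u (xs n)) ub) atTop (𝓝 (dist (u τ) ub)) :=
            hcontτ.tendsto.comp hlim
          rw [heq]
          exact le_of_tendsto h4
            (Eventually.of_forall fun n => (hxs n).1 (xs n) ⟨(hxs n).2.1, le_rfl⟩)
        · obtain ⟨n, hn⟩ := (hlim.eventually (eventually_gt_nhds hlt)).exists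
          exact (hxs n).1 z ⟨hz.1, hn.le⟩
    exact hsub ⟨hτ₀, le_rfl⟩ τ₀ ⟨hτ₀, le_rfl⟩
  have hballall : ∀ τ, t₁ ≤ τ → u τ ∈ ball ub η := by
    intro τ hτ
    rw [mem_ball]
    linarith [htrap τ hτ]
  have hbnd : ∀ x y, t₁ ≤ x → x ≤ y → ‖u y - u x‖ ≤ (1/α) * φ (r x) := by
    intro x y hx hxy
    have hb : ∀ z ∈ Icc x y, u z ∈ ball ub η := fun z hz => hballall z (le_trans hx hz.1)
    have h1 := hdistle x y (le_trans ht₁0 hx) hxy hb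
    have hφry : 0 ≤ φ (r y) :=
      hφnn _ (hrIco y (le_trans (le_trans ht₁0 hx) hxy) (hballall y (le_trans hx hxy)))
    calc ‖u y - u x‖ ≤ (1/α) * (φ (r x) - φ (r y)) := h1
      _ ≤ (1/α) * φ (r x) := by
          apply mul_le_mul_of_nonneg_left _ (by positivity)
          linarith
  -- Cauchy and convergence
  have hcauchy : CauchySeq u := by
    rw [Metric.cauchySeq_iff]
    intro ε hε
    have hev : ∀ᶠ τ in atTop, (1/α) * φ (r τ) < ε := by
      have h3 : Tendsto (fun τ => (1/α) * φ (r τ)) atTop (𝓝 ((1/α) * 0)) :=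
        hφr.const_mul (1/α)
      rw [mul_zero] at h3
      exact h3.eventually_lt_const hε
    obtain ⟨T, hT⟩ := eventually_atTop.1 ((eventually_ge_atTop t₁).and hev)
    refine ⟨T, fun m hm n hn => ?_⟩
    rcases le_total m n with h | h
    · have h1 := hbnd m n (hT m hm).1 h
      rw [dist_eq_norm, norm_sub_rev]
      exact lt_of_le_of_lt h1 (hT m hm).2
    · have h1 := hbnd n m (hT n hn).1 h
      rw [dist_eq_norm]
      exact lt_of_le_of_lt h1 (hT n hn).2
  obtain ⟨uinf, huconv⟩ := cauchySeq_tendsto_of_complete hcauchy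
  have hubeq : ub = uinf := tendsto_nhds_unique hconv' (huconv.comp hs'top)
  subst hubeq
  -- key integral bound from t₁
  have hkey₁ : ∀ y, t₁ ≤ y → α * ∫ s in t₁..y, ‖F (u s)‖ ≤ φ (r t₁) := by
    intro y hy
    have hb : ∀ z ∈ Icc t₁ y, u z ∈ ball ub η := fun z hz => hballall z hz.1
    have hkey := key hF hE hα hangle hrest hode hφall ht₁0 hy hb
      (sub_nonneg.2 (hge y (le_trans ht₁0 hy)))
    have hφry : 0 ≤ φ (r y) :=
      hφnn _ (hrIco y (le_trans ht₁0 hy) (hballall y hy))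
    linarith
  -- F ub = 0
  have hFub : F ub = 0 := by
    by_contra hne
    have hc : 0 < ‖F ub‖ := norm_pos_iff.2 hne
    have hFconv : Tendsto (fun τ => ‖F (u τ)‖) atTop (𝓝 ‖F ub‖) :=
      ((hF.continuous.tendsto ub).comp huconv).norm
    obtain ⟨T₂, hT₂⟩ := eventually_atTop.1
      ((hFconv.eventually_const_lt (by linarith : ‖F ub‖/2 < ‖F ub‖)).and
        (eventually_ge_atTop t₁))
    set T' : ℝ := max T₂ t₁ with hT'def
    have hT't₁ : t₁ ≤ T' := le_max_right _ _
    set B : ℝ := (1/α) * φ (r t₁) with hBdef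
    have hBnn : 0 ≤ B := by positivity
    set y : ℝ := T' + (2*B/‖F ub‖ + 1) with hydef
    have hyT' : T' ≤ y := by
      have : 0 ≤ 2*B/‖F ub‖ := by positivity
      simp only [hydef]
      linarith
    have hIntTy : IntervalIntegrable (fun s => ‖F (u s)‖) volume T' y := by
      apply ContinuousOn.intervalIntegrable
      rw [uIcc_of_le hyT']
      exact (hF.continuous.comp_continuousOn
        (hucont.mono (fun z hz => le_trans (le_trans ht₁0 hT't₁) hz.1))).norm
    have hIntt₁T : IntervalIntegrable (fun s => ‖F (u s)‖) volume t₁ T' := by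
      apply ContinuousOn.intervalIntegrable
      rw [uIcc_of_le hT't₁]
      exact (hF.continuous.comp_continuousOn
        (hucont.mono (fun z hz => le_trans ht₁0 hz.1))).norm
    have hlow : (‖F ub‖/2) * (y - T') ≤ ∫ s in T'..y, ‖F (u s)‖ := by
      have hmono := intervalIntegral.integral_mono_on hyT'
        (intervalIntegrable_const (c := ‖F ub‖/2)) hIntTy
        (fun z hz => ((hT₂ z (le_trans (le_max_left _ _) hz.1)).1).le)
      rw [intervalIntegral.integral_const, smul_eq_mul, mul_comm] at hmono
      exact hmono
    have hup : (∫ s in T'..y, ‖F (u s)‖) ≤ B := by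
      have hsplit : (∫ s in t₁..T', ‖F (u s)‖) + (∫ s in T'..y, ‖F (u s)‖)
          = ∫ s in t₁..y, ‖F (u s)‖ :=
        intervalIntegral.integral_add_adjacent_intervals hIntt₁T hIntTy
      have hnn1 : 0 ≤ ∫ s in t₁..T', ‖F (u s)‖ :=
        intervalIntegral.integral_nonneg hT't₁ (fun z _ => norm_nonneg _)
      have h2 := hkey₁ y (le_trans hT't₁ hyT')
      have h3 : (∫ s in t₁..y, ‖F (u s)‖) ≤ B := by
        rw [hBdef, one_div_mul_eq_div, le_div_iff₀ hα, mul_comm]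
        exact h2
      linarith
    have harith : (‖F ub‖/2) * (y - T') = B + ‖F ub‖/2 := by
      have : y - T' = 2*B/‖F ub‖ + 1 := by simp [hydef]
      rw [this]
      field_simp
    rw [harith] at hlow
    linarith
  refine ⟨ub, hFub, huconv, ?_, ?_, ?_⟩
  · -- integrable on Ioi 0
    have hint1 : IntegrableOn (fun τ => -(F (u τ))) (Ioc 0 t₁) := by
      apply IntegrableOn.mono_set _ Ioc_subset_Icc_self
      apply ContinuousOn.integrableOn_Icc
      exact ((hF.continuous.comp_continuousOn (hucont.mono (fun z hz => hz.1)))).neg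
    have hint2 : IntegrableOn (fun τ => -(F (u τ))) (Ioi t₁) := by
      apply integrableOn_Ioi_of_intervalIntegral_norm_bounded ((1/α) * φ (r t₁)) t₁
        (b := fun n : ℕ => t₁ + n)
        (l := atTop)
      · intro i
        apply IntegrableOn.mono_set _ Ioc_subset_Icc_self
        apply ContinuousOn.integrableOn_Icc
        exact ((hF.continuous.comp_continuousOn
          (hucont.mono (fun z hz => le_trans ht₁0 hz.1)))).neg
      · exact tendsto_atTop_add_const_left _ t₁ tendsto_natCast_atTop_atTop
      · apply Eventually.of_forall
        intro i
        have h1 : t₁ ≤ t₁ + (i:ℝ) := le_add_of_nonneg_right (Nat.cast_nonneg i)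
        have h2 := hkey₁ (t₁ + i) h1
        have h3 : (∫ s in t₁..(t₁ + (i:ℝ)), ‖F (u s)‖) ≤ (1/α) * φ (r t₁) := by
          rw [one_div_mul_eq_div, le_div_iff₀ hα, mul_comm]
          exact h2
        simpa only [norm_neg] using h3
    rw [show Ioi (0:ℝ) = Ioc 0 t₁ ∪ Ioi t₁ from (Ioc_union_Ioi_eq_Ioi ht₁0).symm]
    exact hint1.union hint2
  · -- tendsto 0
    have h1 : Tendsto (fun τ => -(F (u τ))) atTop (𝓝 (-(F ub))) :=
      ((hF.continuous.tendsto ub).comp huconv).neg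
    rwa [hFub, neg_zero] at h1
  · -- the φ bound for every desingularizing function
    intro η' r₀' φ' hφ'
    obtain ⟨hr₀', hη', hφ0', hφnn', hφcont', hφdiff', hφdcont', hφdpos', hballr', hKLin'⟩ := hφ'
    have hφ'all : DesingOn E ub η' r₀' φ' :=
      ⟨hr₀', hη', hφ0', hφnn', hφcont', hφdiff', hφdcont', hφdpos', hballr', hKLin'⟩
    have hballev : ∀ᶠ τ in atTop, u τ ∈ ball ub η' :=
      huconv.eventually_mem (ball_mem_nhds _ hη')
    obtain ⟨T, hT⟩ := eventually_atTop.1 (hballev.and (eventually_ge_atTop (0:ℝ)))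
    rw [eventually_atTop]
    refine ⟨T, fun t ht => ?_⟩
    have ht0 : 0 ≤ t := (hT t ht).2
    have hb : ∀ y, t ≤ y → ‖u y - u t‖ ≤ (1/α) * φ' (E (u t) - E ub) := by
      intro y hy
      have hball2 : ∀ z ∈ Icc t y, u z ∈ ball ub η' := fun z hz => (hT z (le_trans ht hz.1)).1
      have hkey := key hF hE hα hangle hrest hode hφ'all ht0 hy hball2
        (sub_nonneg.2 (hge y (le_trans ht0 hy)))
      have hd := dist_le hF hode ht0 hy
      have hφ'nn : 0 ≤ φ' (E (u y) - E ub) := by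
        apply hφnn'
        refine ⟨sub_nonneg.2 (hge y (le_trans ht0 hy)), ?_⟩
        exact lt_of_le_of_lt (le_abs_self _) (hballr' _ (hT y (le_trans ht hy)).1)
      have h2 : (∫ s in t..y, ‖F (u s)‖)
          ≤ (φ' (E (u t) - E ub) - φ' (E (u y) - E ub))/α := by
        rw [le_div_iff₀ hα, mul_comm]
        exact hkey
      rw [one_div_mul_eq_div]
      have h3 : (φ' (E (u t) - E ub) - φ' (E (u y) - E ub))/α ≤ φ' (E (u t) - E ub)/α := by
        rw [div_le_div_iff_of_pos_right hα]
        linarith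
      linarith
    have hlim : Tendsto (fun y => ‖u y - u t‖) atTop (𝓝 ‖ub - u t‖) :=
      (huconv.sub tendsto_const_nhds).norm
    have h4 := le_of_tendsto hlim (eventually_atTop.2 ⟨t, hb⟩)
    rwa [norm_sub_rev] at h4
end
end

section
/- Let F : ℝ^N → ℝ^N be locally Lipschitz and assume that for every R > 0 there exist a continuously differentiable function E_R : ℝ^N → ℝ and α_R > 0 such that F is quasi-gradient for E_R on the closed ball B̄(0, R) with angle constant α_R, and such that E_R has the KL property at every point. Let u : [0, ∞) → ℝ^N be a bounded solution of u′(t) + F(u(t)) = 0. Then u(t) converges as t → +∞ to a point u∞ with F(u∞) = 0, u′ is integrable on (0, ∞) and u′(t) → 0. Furthermore, for any R ≥ sup_{t ≥ 0} ‖u(t)‖ and any desingularizing function φ of E_R at u∞, one has ‖u(t) − u∞‖ ≤ (1/α_R)·φ(E_R(u(t)) − E_R(u∞)) for all sufficiently large t. -/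
open Real Set Metric Filter Topology MeasureTheory RealInnerProductSpace

noncomputable section

section Aux
variable {N : ℕ} {E : EuclideanSpace ℝ (Fin N) → ℝ} {F : EuclideanSpace ℝ (Fin N) → EuclideanSpace ℝ (Fin N)}
  {u : ℝ → EuclideanSpace ℝ (Fin N)} {α R : ℝ}

lemma chainE (hE : ContDiff ℝ 1 E)
    {t : ℝ} (h : HasDerivAt u (-(F (u t))) t) :
    HasDerivAt (fun s => E (u s)) (-⟪gradient E (u t), F (u t)⟫) t := by
  have hg : HasGradientAt E (gradient E (u t)) (u t) :=
    ((hE.differentiable one_ne_zero) (u t)).hasGradientAt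
  have h2 : HasDerivAt (fun s => E (u s)) _ t := hg.hasFDerivAt.comp_hasDerivAt t h
  simpa [inner_neg_right] using h2

lemma keyIneq (hE : ContDiff ℝ 1 E) (hα : 0 < α) (hFc : Continuous F)
    (hangle : ∀ v ∈ closedBall (0 : EuclideanSpace ℝ (Fin N)) R,
      α * (‖gradient E v‖ * ‖F v‖) ≤ ⟪gradient E v, F v⟫)
    (hode : ∀ t ≥ (0:ℝ), HasDerivAt u (-(F (u t))) t)
    (hball : ∀ t ≥ (0:ℝ), u t ∈ closedBall (0 : EuclideanSpace ℝ (Fin N)) R)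
    {uinf : EuclideanSpace ℝ (Fin N)} {η r₀ : ℝ} {φ : ℝ → ℝ}
    (hd : DesingOn E uinf η r₀ φ)
    {s t : ℝ} (hs0 : 0 ≤ s) (hst : s ≤ t)
    (hmem : ∀ σ ∈ Icc s t, u σ ∈ ball uinf η ∧ E (u σ) - E uinf ∈ Ioo (0:ℝ) r₀) :
    φ (E (u t) - E uinf) + α * ∫ σ in s..t, ‖F (u σ)‖ ≤ φ (E (u s) - E uinf) := by
  obtain ⟨hr₀, hη, hφ0, hφnn, hφc, hφd, hφ'c, hφ'pos, hsmall, hKL⟩ := hd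
  set c := E uinf with hc
  -- continuity of u on relevant region
  have hu_c : ∀ σ, 0 ≤ σ → ContinuousAt u σ := fun σ hσ => (hode σ hσ).continuousAt
  have hf_c : ∀ σ, 0 ≤ σ → ContinuousAt (fun x => ‖F (u x)‖) σ := fun σ hσ =>
    (continuous_norm.continuousAt).comp ((hFc.continuousAt).comp (hu_c σ hσ))
  have hf_int : ∀ {a b : ℝ}, 0 ≤ a → IntervalIntegrable (fun x => ‖F (u x)‖) volume a b → True := fun _ _ => trivial
  have hint : ∀ {b : ℝ}, s ≤ b → IntervalIntegrable (fun x => ‖F (u x)‖) volume s b := by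
    intro b hb
    apply ContinuousOn.intervalIntegrable
    intro x hx
    rw [uIcc_of_le hb] at hx
    exact (hf_c x (hs0.trans hx.1)).continuousWithinAt
  set k : ℝ → ℝ := fun σ => φ (E (u σ) - c) + α * ∫ x in s..σ, ‖F (u x)‖ with hk
  have hanti : AntitoneOn k (Icc s t) := by
    apply antitoneOn_of_deriv_nonpos (convex_Icc s t)
    · apply ContinuousOn.add
      · apply hφc.comp
        · intro σ hσ
          exact (((hE.continuous.continuousAt).comp (hu_c σ (hs0.trans hσ.1))).sub
            continuousAt_const).continuousWithinAt
        · intro σ hσ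
          exact Ioo_subset_Ico_self (hmem σ hσ).2
      · apply ContinuousOn.const_smul ?_ α |>.congr ?_
        · exact fun x => ∫ y in s..x, ‖F (u y)‖
        · have := intervalIntegral.continuousOn_primitive_interval
            (f := fun x => ‖F (u x)‖) (μ := volume) (a := s) (b := t) ?_
          · rw [uIcc_of_le hst] at this; exact this
          · rw [uIcc_of_le hst]
            apply ContinuousOn.integrableOn_compact isCompact_Icc
            exact fun x hx => (hf_c x (hs0.trans hx.1)).continuousWithinAt
        · intro x _; simp [smul_eq_mul]
    · rw [interior_Icc]
      intro σ hσ
      have hσ0 : 0 ≤ σ := hs0.trans hσ.1.le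
      have h1 : HasDerivAt (fun σ => E (u σ) - c) (-⟪gradient E (u σ), F (u σ)⟫) σ :=
        (chainE hE (hode σ hσ0)).sub_const c
      have hp := (hmem σ ⟨hσ.1.le, hσ.2.le⟩).2
      have h2 : HasDerivAt φ (deriv φ (E (u σ) - c)) (E (u σ) - c) :=
        (hφd _ hp).hasDerivAt
      have h3 := h2.comp σ h1
      have h4 : HasDerivAt (fun b => ∫ x in s..b, ‖F (u x)‖) (‖F (u σ)‖) σ := by
        apply intervalIntegral.integral_hasDerivAt_right (hint hσ.1.le)
        · exact ContinuousAt.stronglyMeasurableAtFilter isOpen_Ioi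
            (fun x hx => hf_c x (le_of_lt hx)) σ (lt_of_le_of_lt hs0 hσ.1)
        · exact hf_c σ hσ0
      exact ((h3.add (h4.const_mul α)).differentiableAt).differentiableWithinAt
    · rw [interior_Icc]
      intro σ hσ
      have hσ0 : 0 ≤ σ := hs0.trans hσ.1.le
      have h1 : HasDerivAt (fun σ => E (u σ) - c) (-⟪gradient E (u σ), F (u σ)⟫) σ :=
        (chainE hE (hode σ hσ0)).sub_const c
      have hp := (hmem σ ⟨hσ.1.le, hσ.2.le⟩).2
      have h2 : HasDerivAt φ (deriv φ (E (u σ) - c)) (E (u σ) - c) :=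
        (hφd _ hp).hasDerivAt
      have h3 := h2.comp σ h1
      have h4 : HasDerivAt (fun b => ∫ x in s..b, ‖F (u x)‖) (‖F (u σ)‖) σ := by
        apply intervalIntegral.integral_hasDerivAt_right (hint hσ.1.le)
        · exact ContinuousAt.stronglyMeasurableAtFilter isOpen_Ioi
            (fun x hx => hf_c x (le_of_lt hx)) σ (lt_of_le_of_lt hs0 hσ.1)
        · exact hf_c σ hσ0
      have h5 : HasDerivAt k (deriv φ (E (u σ) - c) * -⟪gradient E (u σ), F (u σ)⟫
          + α * ‖F (u σ)‖) σ := h3.add (h4.const_mul α)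
      rw [h5.deriv]
      -- now the inequality
      have hKL' : 1 ≤ deriv φ (E (u σ) - c) * ‖gradient E (u σ)‖ := by
        have := hKL (u σ) (hmem σ ⟨hσ.1.le, hσ.2.le⟩).1 (by
          have := hp.1; intro h; rw [h] at this; simp at this)
        rwa [abs_of_pos hp.1] at this
      have hang := hangle (u σ) (hball σ hσ0)
      have hφ'p : 0 < deriv φ (E (u σ) - c) := hφ'pos _ hp
      have hFn : (0:ℝ) ≤ ‖F (u σ)‖ := norm_nonneg _
      have hGn : (0:ℝ) ≤ ‖gradient E (u σ)‖ := norm_nonneg _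
      nlinarith [mul_le_mul_of_nonneg_left hang hφ'p.le,
        mul_le_mul_of_nonneg_left hKL' (mul_nonneg hα.le hFn)]
  have h1 := hanti (left_mem_Icc.2 hst) (right_mem_Icc.2 hst) hst
  simp only [hk, intervalIntegral.integral_same, mul_zero, add_zero] at h1
  exact h1

lemma gAnti (hE : ContDiff ℝ 1 E) (hα : 0 < α)
    (hangle : ∀ v ∈ closedBall (0 : EuclideanSpace ℝ (Fin N)) R,
      α * (‖gradient E v‖ * ‖F v‖) ≤ ⟪gradient E v, F v⟫)
    (hode : ∀ t ≥ (0:ℝ), HasDerivAt u (-(F (u t))) t)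
    (hball : ∀ t ≥ (0:ℝ), u t ∈ closedBall (0 : EuclideanSpace ℝ (Fin N)) R) :
    AntitoneOn (fun t => E (u t)) (Ici 0) := by
  apply antitoneOn_of_deriv_nonpos (convex_Ici 0)
  · exact fun t ht => ((hE.continuous.continuousAt).comp (hode t ht).continuousAt).continuousWithinAt
  · rw [interior_Ici]
    exact fun t ht => ((chainE hE (hode t (le_of_lt ht))).differentiableAt).differentiableWithinAt
  · rw [interior_Ici]
    intro t ht
    rw [(chainE hE (hode t ht.le)).deriv]
    have h1 := hangle (u t) (hball t ht.le)
    have h2 : 0 ≤ α * (‖gradient E (u t)‖ * ‖F (u t)‖) := by positivity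
    linarith


lemma dispIneq (hFc : Continuous F)
    (hode : ∀ t ≥ (0:ℝ), HasDerivAt u (-(F (u t))) t)
    {s t : ℝ} (hs0 : 0 ≤ s) (hst : s ≤ t) :
    ‖u t - u s‖ ≤ ∫ σ in s..t, ‖F (u σ)‖ := by
  have hcont : ∀ x ∈ uIcc s t, ContinuousAt (fun σ => -(F (u σ))) x := by
    intro x hx
    rw [uIcc_of_le hst] at hx
    exact (hFc.continuousAt.comp (hode x (hs0.trans hx.1)).continuousAt).neg
  have hii : IntervalIntegrable (fun σ => -(F (u σ))) volume s t :=
    ContinuousOn.intervalIntegrable (fun x hx => (hcont x hx).continuousWithinAt)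
  have heq : ∫ σ in s..t, -(F (u σ)) = u t - u s := by
    apply intervalIntegral.integral_eq_sub_of_hasDerivAt ?_ hii
    intro σ hσ
    rw [uIcc_of_le hst] at hσ
    exact hode σ (hs0.trans hσ.1)
  calc ‖u t - u s‖ = ‖∫ σ in s..t, -(F (u σ))‖ := by rw [heq]
    _ ≤ ∫ σ in s..t, ‖-(F (u σ))‖ := intervalIntegral.norm_integral_le_integral_norm hst
    _ = ∫ σ in s..t, ‖F (u σ)‖ := by simp [norm_neg]

lemma tailBound (hE : ContDiff ℝ 1 E) (hα : 0 < α) (hFc : Continuous F)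
    (hangle : ∀ v ∈ closedBall (0 : EuclideanSpace ℝ (Fin N)) R,
      α * (‖gradient E v‖ * ‖F v‖) ≤ ⟪gradient E v, F v⟫)
    (hrest : ∀ v ∈ closedBall (0 : EuclideanSpace ℝ (Fin N)) R,
      (gradient E v = 0 ↔ F v = 0))
    (hode : ∀ t ≥ (0:ℝ), HasDerivAt u (-(F (u t))) t)
    (hball : ∀ t ≥ (0:ℝ), u t ∈ closedBall (0 : EuclideanSpace ℝ (Fin N)) R)
    {uinf : EuclideanSpace ℝ (Fin N)} (hconv : Tendsto u atTop (𝓝 uinf))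
    {η r₀ : ℝ} {φ : ℝ → ℝ} (hd : DesingOn E uinf η r₀ φ) :
    ∀ᶠ t in atTop, ‖u t - uinf‖ ≤ (1/α) * φ (E (u t) - E uinf) := by
  obtain ⟨hr₀, hη, hφ0, hφnn, hφc, hφd, hφ'c, hφ'pos, hsmall, hKL⟩ := hd
  set c := E uinf with hc
  set g : ℝ → ℝ := fun t => E (u t) with hg
  have hganti : AntitoneOn g (Ici 0) := gAnti hE hα hangle hode hball
  have hglim : Tendsto g atTop (𝓝 c) := (hE.continuous.tendsto uinf).comp hconv
  have hge : ∀ t ≥ (0:ℝ), c ≤ g t := by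
    intro t ht
    apply le_of_tendsto hglim
    filter_upwards [eventually_ge_atTop t] with s hs
    exact hganti ht (ht.trans hs) hs
  by_cases hcase : ∃ t₁ ≥ (0:ℝ), g t₁ = c
  · -- energy reaches its limit: trajectory becomes stationary
    obtain ⟨t₁, ht₁0, ht₁⟩ := hcase
    have hconst : ∀ t ≥ t₁, g t = c := fun t ht =>
      le_antisymm (ht₁ ▸ hganti ht₁0 (ht₁0.trans ht) ht) (hge t (ht₁0.trans ht))
    have hF0 : ∀ t > t₁, F (u t) = 0 := by
      intro t ht
      have h0t : (0:ℝ) ≤ t := ht₁0.trans ht.le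
      have hgd := chainE (F := F) hE (hode t h0t)
      have hgz : HasDerivAt g 0 t := by
        apply (hasDerivAt_const t c).congr_of_eventuallyEq
        filter_upwards [Ioi_mem_nhds ht] with s hs
        exact hconst s (le_of_lt hs)
      have huniq : -⟪gradient E (u t), F (u t)⟫ = 0 := hgd.unique hgz
      have h1 := hangle (u t) (hball t h0t)
      have hinn : ⟪gradient E (u t), F (u t)⟫ = 0 := by
        have : - -⟪gradient E (u t), F (u t)⟫ = ⟪gradient E (u t), F (u t)⟫ := neg_neg _
        linarith [huniq, this]
      have h2 : α * (‖gradient E (u t)‖ * ‖F (u t)‖) ≤ 0 := by linarith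
      have h3 : ‖gradient E (u t)‖ * ‖F (u t)‖ = 0 := by
        have := mul_nonneg (norm_nonneg (gradient E (u t))) (norm_nonneg (F (u t)))
        nlinarith
      rcases mul_eq_zero.1 h3 with h | h
      · exact (hrest (u t) (hball t h0t)).1 (norm_eq_zero.1 h)
      · exact norm_eq_zero.1 h
    have huconst : ∀ t ≥ t₁ + 1, u t = u (t₁ + 1) := by
      intro t ht
      have key : ‖u t - u (t₁+1)‖ ≤ 0 * ‖t - (t₁+1)‖ := by
        apply Convex.norm_image_sub_le_of_norm_hasDerivWithin_le
          (f := u) (f' := fun x => -(F (u x))) (s := Icc (t₁+1) t)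
          ?_ ?_ (convex_Icc _ _) (left_mem_Icc.2 ht) (right_mem_Icc.2 ht)
        · intro x hx
          exact (hode x (by linarith [hx.1])).hasDerivWithinAt
        · intro x hx
          have : F (u x) = 0 := hF0 x (by linarith [hx.1])
          simp [this]
      simp only [zero_mul] at key
      have := le_antisymm key (norm_nonneg _)
      rwa [norm_eq_zero, sub_eq_zero] at this
    have hLuinf : uinf = u (t₁ + 1) := by
      apply tendsto_nhds_unique hconv
      apply tendsto_const_nhds.congr'
      filter_upwards [eventually_ge_atTop (t₁+1)] with t ht
      exact (huconst t ht).symm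
    filter_upwards [eventually_ge_atTop (t₁+1)] with t ht
    have h1 : u t = uinf := (huconst t ht).trans hLuinf.symm
    rw [h1, hc]
    simp [hφ0]
  · -- energy stays strictly above its limit
    push_neg at hcase
    have hpos : ∀ t ≥ (0:ℝ), c < g t := fun t ht =>
      lt_of_le_of_ne (hge t ht) (fun h => hcase t ht h.symm)
    have hev : ∀ᶠ t in atTop, u t ∈ ball uinf η :=
      hconv.eventually (ball_mem_nhds uinf hη)
    obtain ⟨T', hT'⟩ := eventually_atTop.1 hev
    set T := max T' 0 with hT
    have hball2 : ∀ t ≥ T, u t ∈ ball uinf η := fun t ht => hT' t ((le_max_left _ _).trans ht)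
    have hmemIoo : ∀ t ≥ T, g t - c ∈ Ioo (0:ℝ) r₀ := by
      intro t ht
      have h0 : (0:ℝ) ≤ t := (le_max_right _ _).trans ht
      constructor
      · linarith [hpos t h0]
      · have := hsmall (u t) (hball2 t ht)
        rw [abs_of_pos (by linarith [hpos t h0])] at this
        exact this
    filter_upwards [eventually_ge_atTop T] with t ht
    have h0t : (0:ℝ) ≤ t := (le_max_right _ _).trans ht
    -- for all s ≥ t, ‖u s - u t‖ ≤ (1/α) φ(g t - c)
    have hbnd : ∀ s ≥ t, ‖u s - u t‖ ≤ (1/α) * φ (g t - c) := by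
      intro s hs
      have hkey := keyIneq hE hα hFc hangle hode hball
        ⟨hr₀, hη, hφ0, hφnn, hφc, hφd, hφ'c, hφ'pos, hsmall, hKL⟩ h0t hs
        (fun σ hσ => ⟨hball2 σ (ht.trans hσ.1), hmemIoo σ (ht.trans hσ.1)⟩)
      have hφs : 0 ≤ φ (g s - c) := hφnn _ (Ioo_subset_Ico_self (hmemIoo s (ht.trans hs)))
      have hdisp := dispIneq hFc hode h0t hs
      have hintnn : α * ∫ σ in t..s, ‖F (u σ)‖ ≤ φ (g t - c) - φ (g s - c) := by
        simp only [hg] at hkey hφs ⊢; linarith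
      calc ‖u s - u t‖ ≤ ∫ σ in t..s, ‖F (u σ)‖ := hdisp
        _ ≤ (1/α) * φ (g t - c) := by
            rw [div_mul_eq_mul_div, le_div_iff₀ hα, one_mul, mul_comm]
            linarith
    have : ‖uinf - u t‖ ≤ (1/α) * φ (g t - c) := by
      apply le_of_tendsto (f := fun s => ‖u s - u t‖) ((hconv.sub_const (u t)).norm)
      filter_upwards [eventually_ge_atTop t] with s hs
      exact hbnd s hs
    rw [norm_sub_rev] at this
    exact this

end Aux

theorem stmt8 {N : ℕ} (F : EuclideanSpace ℝ (Fin N) → EuclideanSpace ℝ (Fin N))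
    (hF : LocallyLipschitz F)
    (ER : ℝ → EuclideanSpace ℝ (Fin N) → ℝ) (αR : ℝ → ℝ)
    (hER : ∀ R > (0:ℝ), ContDiff ℝ 1 (ER R) ∧ 0 < αR R ∧
      (∀ v ∈ closedBall (0 : EuclideanSpace ℝ (Fin N)) R,
        αR R * (‖gradient (ER R) v‖ * ‖F v‖) ≤ ⟪gradient (ER R) v, F v⟫) ∧
      (∀ v ∈ closedBall (0 : EuclideanSpace ℝ (Fin N)) R,
        (gradient (ER R) v = 0 ↔ F v = 0)) ∧
      (∀ x, KLAt (ER R) x))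
    (u : ℝ → EuclideanSpace ℝ (Fin N))
    (hode : ∀ t ≥ (0:ℝ), HasDerivAt u (-(F (u t))) t)
    (hbdd : ∃ C, ∀ t ≥ (0:ℝ), ‖u t‖ ≤ C) :
    ∃ uinf, F uinf = 0 ∧ Tendsto u atTop (𝓝 uinf) ∧
      IntegrableOn (fun t => -(F (u t))) (Ioi 0) ∧
      Tendsto (fun t => -(F (u t))) atTop (𝓝 0) ∧
      ∀ R > (0:ℝ), (∀ t ≥ (0:ℝ), ‖u t‖ ≤ R) →
        ∀ η r₀ φ, DesingOn (ER R) uinf η r₀ φ →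
          ∀ᶠ t in atTop, ‖u t - uinf‖ ≤ (1 / αR R) * φ (ER R (u t) - ER R uinf) := by
  have hFc : Continuous F := hF.continuous
  obtain ⟨C, hC⟩ := hbdd
  have hC0 : 0 ≤ C := (norm_nonneg (u 0)).trans (hC 0 le_rfl)
  obtain ⟨hE, hα, hangle, hrest, hKLall⟩ := hER (C+1) (by linarith)
  set R : ℝ := C + 1 with hRdef
  set E : EuclideanSpace ℝ (Fin N) → ℝ := ER R with hEdef
  set α : ℝ := αR R with hαdef
  have hball : ∀ t ≥ (0:ℝ), u t ∈ closedBall (0 : EuclideanSpace ℝ (Fin N)) R := by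
    intro t ht; rw [mem_closedBall_zero_iff]
    have := hC t ht; rw [hRdef]; linarith
  have hu_c : ∀ σ, (0:ℝ) ≤ σ → ContinuousAt u σ := fun σ hσ => (hode σ hσ).continuousAt
  have hII : ∀ a b : ℝ, 0 ≤ a → a ≤ b →
      IntervalIntegrable (fun x => ‖F (u x)‖) MeasureTheory.volume a b := by
    intro a b ha hab
    apply ContinuousOn.intervalIntegrable
    intro x hx; rw [uIcc_of_le hab] at hx
    exact ((continuous_norm.continuousAt).comp
      ((hFc.continuousAt).comp (hu_c x (ha.trans hx.1)))).continuousWithinAt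
  have hIOc : ∀ b : ℝ, IntegrableOn (fun t => -(F (u t))) (Ioc 0 b) := by
    intro b
    rcases le_or_gt b 0 with h | h
    · rw [Ioc_eq_empty (by linarith)]; exact integrableOn_empty
    · apply (ContinuousOn.integrableOn_compact (isCompact_Icc (a := (0:ℝ)) (b := b)) ?_).mono_set
        Ioc_subset_Icc_self
      exact fun x hx => ((hFc.continuousAt.comp (hu_c x hx.1)).neg).continuousWithinAt
  have hganti : AntitoneOn (fun t => E (u t)) (Ici 0) := gAnti hE hα hangle hode hball
  -- the limiting energy value
  have hEbd : BddBelow (range fun t => E (u (max t 0))) := by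
    obtain ⟨v, hv, hvmin⟩ := (isCompact_closedBall (0 : EuclideanSpace ℝ (Fin N)) R).exists_isMinOn
      ⟨0, mem_closedBall_self (by rw [hRdef]; linarith)⟩ (hE.continuous.continuousOn)
    exact ⟨E v, by rintro x ⟨t, rfl⟩; exact isMinOn_iff.1 hvmin _ (hball _ (le_max_right _ _))⟩
  have hanti2 : Antitone (fun t => E (u (max t 0))) := by
    intro a b hab
    exact hganti (le_max_right a 0) (le_max_right b 0) (max_le_max hab le_rfl)
  set ℓ : ℝ := ⨅ t : ℝ, E (u (max t 0)) with hℓdef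
  have hgl : Tendsto (fun t => E (u t)) atTop (𝓝 ℓ) := by
    apply (tendsto_atTop_ciInf hanti2 hEbd).congr'
    filter_upwards [eventually_ge_atTop (0:ℝ)] with t ht
    rw [max_eq_left ht]
  -- an ω-limit point
  obtain ⟨uinf, huinfmem, ψ, hψ, hψtend⟩ :=
    (isCompact_closedBall (0 : EuclideanSpace ℝ (Fin N)) R).tendsto_subseq
    (x := fun n : ℕ => u n) (fun n => hball n (Nat.cast_nonneg n))
  have hpt : Tendsto (fun n : ℕ => ((ψ n : ℕ) : ℝ)) atTop atTop :=
    tendsto_natCast_atTop_atTop.comp hψ.tendsto_atTop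
  have hEuinf : E uinf = ℓ :=
    tendsto_nhds_unique ((hE.continuous.tendsto uinf).comp hψtend) (hgl.comp hpt)
  have hge : ∀ t ≥ (0:ℝ), ℓ ≤ E (u t) := by
    intro t ht
    apply le_of_tendsto hgl
    filter_upwards [eventually_ge_atTop t] with s hs
    exact hganti ht (ht.trans hs) hs
  by_cases hcase : ∃ t₁ ≥ (0:ℝ), E (u t₁) = ℓ
  · -- the energy attains its limit: the trajectory is eventually constant
    obtain ⟨t₁, ht₁0, ht₁⟩ := hcase
    have hconst : ∀ t ≥ t₁, E (u t) = ℓ := fun t ht =>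
      le_antisymm (ht₁ ▸ hganti ht₁0 (ht₁0.trans ht) ht) (hge t (ht₁0.trans ht))
    have hF0 : ∀ t > t₁, F (u t) = 0 := by
      intro t ht
      have h0t : (0:ℝ) ≤ t := ht₁0.trans ht.le
      have hgd := chainE (F := F) hE (hode t h0t)
      have hgz : HasDerivAt (fun s => E (u s)) 0 t := by
        apply (hasDerivAt_const t ℓ).congr_of_eventuallyEq
        filter_upwards [Ioi_mem_nhds ht] with s hs
        exact hconst s (le_of_lt hs)
      have huniq : -⟪gradient E (u t), F (u t)⟫ = 0 := hgd.unique hgz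
      have h1 := hangle (u t) (hball t h0t)
      have hinn : ⟪gradient E (u t), F (u t)⟫ = 0 := by
        have : - -⟪gradient E (u t), F (u t)⟫ = ⟪gradient E (u t), F (u t)⟫ := neg_neg _
        linarith [huniq, this]
      have h3 : ‖gradient E (u t)‖ * ‖F (u t)‖ = 0 := by
        have h4 := mul_nonneg (norm_nonneg (gradient E (u t))) (norm_nonneg (F (u t)))
        nlinarith
      rcases mul_eq_zero.1 h3 with h | h
      · exact (hrest (u t) (hball t h0t)).1 (norm_eq_zero.1 h)
      · exact norm_eq_zero.1 h
    have huconst : ∀ t ≥ t₁ + 1, u t = u (t₁ + 1) := by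
      intro t ht
      have key : ‖u t - u (t₁+1)‖ ≤ 0 * ‖t - (t₁+1)‖ := by
        apply Convex.norm_image_sub_le_of_norm_hasDerivWithin_le
          (f := u) (f' := fun x => -(F (u x))) (s := Icc (t₁+1) t)
          ?_ ?_ (convex_Icc _ _) (left_mem_Icc.2 ht) (right_mem_Icc.2 ht)
        · intro x hx
          exact (hode x (by linarith [hx.1])).hasDerivWithinAt
        · intro x hx
          have : F (u x) = 0 := hF0 x (by linarith [hx.1])
          simp [this]
      simp only [zero_mul] at key
      have := le_antisymm key (norm_nonneg _)
      rwa [norm_eq_zero, sub_eq_zero] at this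
    have hconv : Tendsto u atTop (𝓝 (u (t₁ + 1))) := by
      apply tendsto_const_nhds.congr'
      filter_upwards [eventually_ge_atTop (t₁+1)] with t ht
      exact (huconst t ht).symm
    refine ⟨u (t₁ + 1), hF0 (t₁+1) (lt_add_one t₁), hconv, ?_, ?_, ?_⟩
    · have hz : IntegrableOn (fun _ : ℝ => (0 : EuclideanSpace ℝ (Fin N))) (Ioi (t₁+1)) :=
        integrableOn_zero
      have h2 : IntegrableOn (fun t => -(F (u t))) (Ioi (t₁+1)) := by
        apply hz.congr_fun ?_ measurableSet_Ioi
        intro x hx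
        simp [hF0 x (lt_trans (lt_add_one t₁) hx)]
      have h3 := (hIOc (t₁+1)).union h2
      rwa [Ioc_union_Ioi_eq_Ioi (by linarith)] at h3
    · apply tendsto_const_nhds.congr'
      filter_upwards [eventually_ge_atTop (t₁+1)] with t ht
      simp [hF0 t (by linarith)]
    · intro R' hR' hb' η' r₀' φ' hd'
      obtain ⟨hE', hα', hangle', hrest', -⟩ := hER R' hR'
      have hball' : ∀ t ≥ (0:ℝ), u t ∈ closedBall (0 : EuclideanSpace ℝ (Fin N)) R' :=
        fun t ht => mem_closedBall_zero_iff.2 (hb' t ht)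
      exact tailBound hE' hα' hFc hangle' hrest' hode hball' hconv hd'
  · -- the energy stays strictly above its limit: Łojasiewicz bootstrap
    push_neg at hcase
    have hpos : ∀ t ≥ (0:ℝ), ℓ < E (u t) := fun t ht =>
      lt_of_le_of_ne (hge t ht) (fun h => hcase t ht h.symm)
    obtain ⟨η, r₀, φ, hd⟩ := hKLall uinf
    obtain ⟨hr₀, hη, hφ0, hφnn, hφc, hφd, hφ'c, hφ'pos, hsmall, hKL⟩ := id hd
    rw [hEuinf] at hsmall hKL
    -- φ of the energy gap tends to 0
    have hsub : Tendsto (fun t => E (u t) - ℓ) atTop (𝓝 0) := by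
      simpa using hgl.sub_const ℓ
    have hmemev : ∀ᶠ t in atTop, E (u t) - ℓ ∈ Ico 0 r₀ := by
      filter_upwards [hsub.eventually_lt_const hr₀, eventually_ge_atTop (0:ℝ)] with t h1t h0t
      exact ⟨by linarith [hge t h0t], h1t⟩
    have hφtend : Tendsto (fun t => φ (E (u t) - ℓ)) atTop (𝓝 0) := by
      have hcw : ContinuousWithinAt φ (Ico 0 r₀) 0 := hφc 0 ⟨le_rfl, hr₀⟩
      have := hcw.tendsto.comp (tendsto_nhdsWithin_iff.2 ⟨hsub, hmemev⟩)
      rwa [hφ0] at this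
    -- choose a good starting time t₀
    obtain ⟨T₂, hT₂⟩ := eventually_atTop.1
      ((hφtend.eventually_lt_const (show (0:ℝ) < α * (η/2) by positivity)).and
        (eventually_ge_atTop (0:ℝ)))
    obtain ⟨n, hn1, hn2⟩ := ((hψtend.eventually (ball_mem_nhds uinf (half_pos hη))).and
      (hpt.eventually (eventually_ge_atTop T₂))).exists
    set t₀ : ℝ := ((ψ n : ℕ) : ℝ) with ht₀def
    have ht₀0 : (0:ℝ) ≤ t₀ := Nat.cast_nonneg _
    have hu0 : dist (u t₀) uinf < η/2 := by
      have : (fun n : ℕ => u n) (ψ n) ∈ ball uinf (η/2) := hn1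
      rwa [mem_ball] at this
    have hφt₀ : φ (E (u t₀) - ℓ) < α * (η/2) := (hT₂ _ hn2).1
    have hmemIoo : ∀ t ≥ t₀, u t ∈ ball uinf η → E (u t) - ℓ ∈ Ioo 0 r₀ := by
      intro t ht hb
      refine ⟨by linarith [hpos t (ht₀0.trans ht)], ?_⟩
      have := hsmall (u t) hb
      rwa [abs_of_pos (by linarith [hpos t (ht₀0.trans ht)])] at this
    have hubt₀ : u t₀ ∈ ball uinf η := mem_ball.2 (by linarith)
    have hmem₀ : E (u t₀) - ℓ ∈ Ioo 0 r₀ := hmemIoo t₀ le_rfl hubt₀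
    have hφnn₀ : 0 ≤ φ (E (u t₀) - ℓ) := hφnn _ (Ioo_subset_Ico_self hmem₀)
    set δ : ℝ := dist (u t₀) uinf + (1/α) * φ (E (u t₀) - ℓ) with hδdef
    have hδη : δ < η := by
      have h1 : (1/α) * φ (E (u t₀) - ℓ) < (1/α) * (α * (η/2)) :=
        mul_lt_mul_of_pos_left hφt₀ (by positivity)
      have h2 : (1/α) * (α * (η/2)) = η/2 := by field_simp
      rw [hδdef]; linarith
    -- repack the desingularizing data with `E uinf` in place of `ℓ`
    have hd' : DesingOn E uinf η r₀ φ := hd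
    -- the trajectory stays in the ball from time t₀ onwards
    have hstay : ∀ t ≥ t₀, u t ∈ ball uinf η := by
      by_contra hcon
      push_neg at hcon
      obtain ⟨τ, hτ₁, hτ₂⟩ := hcon
      set B : Set ℝ := {t : ℝ | t₀ ≤ t ∧ η ≤ dist (u t) uinf} with hBdef
      have hBne : B.Nonempty := ⟨τ, hτ₁, by rwa [mem_ball, not_lt] at hτ₂⟩
      have hBbdd : BddBelow B := ⟨t₀, fun x hx => hx.1⟩
      have hBclosed : IsClosed B := by
        have hco : ContinuousOn (fun t => dist (u t) uinf) (Ici t₀) := fun x hx =>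
          (((continuous_id.dist continuous_const).continuousAt).comp
            (hu_c x (ht₀0.trans hx))).continuousWithinAt
        have hBeq : B = Ici t₀ ∩ (fun t => dist (u t) uinf) ⁻¹' (Ici η) := by
          ext x; simp [hBdef, and_comm]
        rw [hBeq]
        exact hco.preimage_isClosed_of_isClosed isClosed_Ici isClosed_Ici
      set T := sInf B with hTdef
      have hTB : T ∈ B := hBclosed.csInf_mem hBne hBbdd
      have hTd : η ≤ dist (u T) uinf := hTB.2
      have ht₀T : t₀ < T := by
        rcases lt_or_eq_of_le hTB.1 with h | h
        · exact h
        · exfalso; rw [← h] at hTd; linarith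
      have hless : ∀ σ, σ ∈ Ico t₀ T → u σ ∈ ball uinf η := by
        intro σ hσ
        by_contra hge'
        rw [mem_ball, not_lt] at hge'
        exact absurd (csInf_le hBbdd (⟨hσ.1, hge'⟩ : σ ∈ B)) (not_le.2 hσ.2)
      have hbnd2 : ∀ s, s ∈ Ico t₀ T → dist (u s) uinf ≤ δ := by
        intro s hs
        have hkey := keyIneq hE hα hFc hangle hode hball hd' ht₀0 hs.1
          (fun σ hσ => by
            have hσT : σ ∈ Ico t₀ T := ⟨hσ.1, lt_of_le_of_lt hσ.2 hs.2⟩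
            exact ⟨hless σ hσT, by
              rw [hEuinf]; exact hmemIoo σ hσ.1 (hless σ hσT)⟩)
        rw [hEuinf] at hkey
        have hφs : 0 ≤ φ (E (u s) - ℓ) := hφnn _ (Ioo_subset_Ico_self (hmemIoo s hs.1 (hless s hs)))
        have hdisp := dispIneq hFc hode ht₀0 hs.1
        have hi1 : ∫ σ in t₀..s, ‖F (u σ)‖ ≤ φ (E (u t₀) - ℓ) / α :=
          (le_div_iff₀ hα).2 (by rw [mul_comm]; linarith)
        have : dist (u s) (u t₀) ≤ (1/α) * φ (E (u t₀) - ℓ) := by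
          rw [dist_eq_norm, one_div_mul_eq_div]
          exact hdisp.trans hi1
        calc dist (u s) uinf ≤ dist (u s) (u t₀) + dist (u t₀) uinf := dist_triangle _ _ _
          _ ≤ δ := by rw [hδdef]; linarith
      have hTle : dist (u T) uinf ≤ δ := by
        have hne : (𝓝[Ico t₀ T] T).NeBot := by
          rw [← mem_closure_iff_nhdsWithin_neBot, closure_Ico (ne_of_lt ht₀T)]
          exact right_mem_Icc.2 ht₀T.le
        apply le_of_tendsto (f := fun s => dist (u s) uinf)
          (((((continuous_id.dist continuous_const).continuousAt).comp
            (hu_c T (ht₀0.trans hTB.1))).continuousWithinAt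
              (s := Ico t₀ T)).tendsto)
        exact eventually_nhdsWithin_of_forall hbnd2
      linarith
    -- key integral bound and distance estimate
    have hIneq : ∀ t ≥ t₀, ∀ s ≥ t,
        φ (E (u s) - ℓ) + α * ∫ σ in t..s, ‖F (u σ)‖ ≤ φ (E (u t) - ℓ) := by
      intro t ht s hs
      have hkey := keyIneq hE hα hFc hangle hode hball hd' (ht₀0.trans ht) hs
        (fun σ hσ => ⟨hstay σ (ht.trans hσ.1), by
          rw [hEuinf]; exact hmemIoo σ (ht.trans hσ.1) (hstay σ (ht.trans hσ.1))⟩)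
      rwa [hEuinf] at hkey
    have hBnd : ∀ t ≥ t₀, ∀ s ≥ t, dist (u t) (u s) ≤ (1/α) * φ (E (u t) - ℓ) := by
      intro t ht s hs
      have h1 := hIneq t ht s hs
      have hφs : 0 ≤ φ (E (u s) - ℓ) :=
        hφnn _ (Ioo_subset_Ico_self (hmemIoo s (ht.trans hs) (hstay s (ht.trans hs))))
      have hdisp := dispIneq hFc hode (ht₀0.trans ht) hs
      rw [dist_comm, dist_eq_norm, one_div_mul_eq_div]
      exact hdisp.trans ((le_div_iff₀ hα).2 (by rw [mul_comm]; linarith))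
    have hq : ∀ t ≥ t₀, dist (u t) uinf ≤ (1/α) * φ (E (u t) - ℓ) := by
      intro t ht
      have hf : Tendsto (fun k : ℕ => (1/α) * φ (E (u t) - ℓ) +
          dist ((fun n : ℕ => u n) (ψ k)) uinf) atTop (𝓝 ((1/α) * φ (E (u t) - ℓ) + 0)) := by
        apply tendsto_const_nhds.add
        have := hψtend.dist (tendsto_const_nhds (x := uinf))
        simpa using this
      rw [← add_zero ((1/α) * φ (E (u t) - ℓ))]
      apply ge_of_tendsto hf
      filter_upwards [hpt.eventually (eventually_ge_atTop t)] with k hk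
      calc dist (u t) uinf ≤ dist (u t) (u ((ψ k : ℕ) : ℝ)) +
            dist (u ((ψ k : ℕ) : ℝ)) uinf := dist_triangle _ _ _
        _ ≤ (1/α) * φ (E (u t) - ℓ) + dist ((fun n : ℕ => u n) (ψ k)) uinf := by
            have := hBnd t ht _ hk
            exact add_le_add this le_rfl
    have hconv : Tendsto u atTop (𝓝 uinf) := by
      rw [tendsto_iff_dist_tendsto_zero]
      apply tendsto_of_tendsto_of_tendsto_of_le_of_le'
        (g := fun _ : ℝ => (0:ℝ)) (h := fun t => (1/α) * φ (E (u t) - ℓ))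
        tendsto_const_nhds ?_ ?_ ?_
      · have := hφtend.const_mul (1/α)
        simpa using this
      · exact Eventually.of_forall (fun t => dist_nonneg)
      · filter_upwards [eventually_ge_atTop t₀] with t ht
        exact hq t ht
    -- the limit is a rest point
    set M : ℝ := φ (E (u t₀) - ℓ) / α with hMdef
    have hM : ∀ s ≥ t₀, ∫ σ in t₀..s, ‖F (u σ)‖ ≤ M := by
      intro s hs
      have h1 := hIneq t₀ le_rfl s hs
      have hφs : 0 ≤ φ (E (u s) - ℓ) :=
        hφnn _ (Ioo_subset_Ico_self (hmemIoo s hs (hstay s hs)))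
      exact (le_div_iff₀ hα).2 (by rw [mul_comm]; linarith)
    have hFuinf : F uinf = 0 := by
      by_contra hne
      have hc' : 0 < ‖F uinf‖ := norm_pos_iff.2 hne
      have htendF : Tendsto (fun t => ‖F (u t)‖) atTop (𝓝 ‖F uinf‖) :=
        ((hFc.tendsto uinf).comp hconv).norm
      obtain ⟨T₃, hT₃⟩ := eventually_atTop.1
        ((htendF.eventually_const_lt (half_lt_self hc')).and (eventually_ge_atTop t₀))
      obtain ⟨m, hm⟩ := exists_nat_gt (M / (‖F uinf‖/2))
      set T₄ : ℝ := max T₃ t₀ with hT₄def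
      have hT₄t₀ : t₀ ≤ T₄ := le_max_right _ _
      have hT₄0 : (0:ℝ) ≤ T₄ := ht₀0.trans hT₄t₀
      have hlow : (m : ℝ) * (‖F uinf‖/2) ≤ ∫ σ in T₄..(T₄ + m), ‖F (u σ)‖ := by
        have hconst : ∫ σ in T₄..(T₄ + m), (‖F uinf‖/2) = (m : ℝ) * (‖F uinf‖/2) := by
          rw [intervalIntegral.integral_const]; simp [smul_eq_mul]
        rw [← hconst]
        apply intervalIntegral.integral_mono_on (by linarith [Nat.cast_nonneg (α := ℝ) m])
          (intervalIntegrable_const) (hII T₄ (T₄ + m) hT₄0 (by linarith [Nat.cast_nonneg (α := ℝ) m]))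
        intro x hx
        exact le_of_lt (hT₃ x ((le_max_left _ _).trans hx.1)).1
      have hsplit : ∫ σ in t₀..(T₄ + m), ‖F (u σ)‖ =
          (∫ σ in t₀..T₄, ‖F (u σ)‖) + ∫ σ in T₄..(T₄ + m), ‖F (u σ)‖ :=
        (intervalIntegral.integral_add_adjacent_intervals
          (hII t₀ T₄ ht₀0 hT₄t₀)
          (hII T₄ (T₄ + m) hT₄0 (by linarith [Nat.cast_nonneg (α := ℝ) m]))).symm
      have hnn : 0 ≤ ∫ σ in t₀..T₄, ‖F (u σ)‖ :=
        intervalIntegral.integral_nonneg hT₄t₀ (fun x _ => norm_nonneg _)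
      have hup := hM (T₄ + m) (by linarith [Nat.cast_nonneg (α := ℝ) m])
      have hmM : M < (m:ℝ) * (‖F uinf‖/2) := (div_lt_iff₀ (half_pos hc')).1 hm
      linarith [hlow, hsplit ▸ hup]
    refine ⟨uinf, hFuinf, hconv, ?_, ?_, ?_⟩
    · apply MeasureTheory.integrableOn_Ioi_of_intervalIntegral_norm_bounded
        ((∫ σ in (0:ℝ)..t₀, ‖F (u σ)‖) + M) 0 (b := fun i : ℕ => t₀ + i)
        (fun i => hIOc (t₀ + i))
        (tendsto_atTop_add_const_left atTop t₀ tendsto_natCast_atTop_atTop)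
      apply Eventually.of_forall
      intro i
      have h1 : ∀ x, ‖-(F (u x))‖ = ‖F (u x)‖ := fun x => norm_neg _
      simp only [h1]
      have hsplit : ∫ σ in (0:ℝ)..(t₀ + i), ‖F (u σ)‖ =
          (∫ σ in (0:ℝ)..t₀, ‖F (u σ)‖) + ∫ σ in t₀..(t₀ + i), ‖F (u σ)‖ :=
        (intervalIntegral.integral_add_adjacent_intervals
          (hII 0 t₀ le_rfl ht₀0)
          (hII t₀ (t₀ + i) ht₀0 (by linarith [Nat.cast_nonneg (α := ℝ) i]))).symm
      rw [hsplit]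
      exact add_le_add le_rfl (hM (t₀ + i) (by linarith [Nat.cast_nonneg (α := ℝ) i]))
    · have := ((hFc.tendsto uinf).comp hconv).neg
      rwa [hFuinf, neg_zero] at this
    · intro R' hR' hb' η' r₀' φ' hd'
      obtain ⟨hE', hα', hangle', hrest', -⟩ := hER R' hR'
      have hball' : ∀ t ≥ (0:ℝ), u t ∈ closedBall (0 : EuclideanSpace ℝ (Fin N)) R' :=
        fun t ht => mem_closedBall_zero_iff.2 (hb' t ht)
      exact tailBound hE' hα' hFc hangle' hrest' hode hball' hconv hd'
end
end

section
/- Let E : ℝ^N → ℝ be twice continuously differentiable and let u : [0, ∞) → ℝ^N be a bounded solution of the gradient system u′(t) + ∇E(u(t)) = 0 converging to a point u∞ which is a non trivial critical point of E. Let φ be a desingularizing function of E at u∞ on B(u∞, η), assume φ′(s) ≥ β·s^{−1/2} for some β > 0 and all small s > 0, set ψ = φ^{−1} (defined on [0, a) with a ∈ (0, +∞]), and let γ : [0, ∞) → (0, a) solve the one-dimensional worst-case gradient dynamics γ′(t) + ψ′(γ(t)) = 0 with γ(0) ∈ (0, a). Then there exist constants c, d > 0 and a time T ≥ 0 such that for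 all t ≥ T: E(u(t)) − E(u∞) ≤ c·ψ(γ(t)) and ‖u(t) − u∞‖ ≤ d·γ(t). -/
open Real Set Metric Filter Topology MeasureTheory

noncomputable section

private lemma my_antitone {f f' : ℝ → ℝ} {a : ℝ}
    (hd : ∀ x ∈ Ici a, HasDerivAt f (f' x) x)
    (hb : ∀ x ∈ Ioi a, f' x ≤ 0) : AntitoneOn f (Ici a) := by
  apply antitoneOn_of_deriv_nonpos (convex_Ici a)
  · exact fun x hx => (hd x hx).continuousAt.continuousWithinAt
  · intro x hx
    rw [interior_Ici] at hx
    exact (hd x (Ioi_subset_Ici_self hx)).differentiableAt.differentiableWithinAt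
  · intro x hx
    rw [interior_Ici] at hx
    rw [(hd x (Ioi_subset_Ici_self hx)).deriv]
    exact hb x hx

private lemma my_monotone {f f' : ℝ → ℝ} {a : ℝ}
    (hd : ∀ x ∈ Ici a, HasDerivAt f (f' x) x)
    (hb : ∀ x ∈ Ioi a, 0 ≤ f' x) : MonotoneOn f (Ici a) := by
  apply monotoneOn_of_deriv_nonneg (convex_Ici a)
  · exact fun x hx => (hd x hx).continuousAt.continuousWithinAt
  · intro x hx
    rw [interior_Ici] at hx
    exact (hd x (Ioi_subset_Ici_self hx)).differentiableAt.differentiableWithinAt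
  · intro x hx
    rw [interior_Ici] at hx
    rw [(hd x (Ioi_subset_Ici_self hx)).deriv]
    exact hb x hx

private lemma my_decay_le {f f' : ℝ → ℝ} {a : ℝ}
    (hd : ∀ x ∈ Ici a, HasDerivAt f (f' x) x)
    (hb : ∀ x ∈ Ici a, f' x ≤ -1) :
    ∀ b ∈ Ici a, f b ≤ f a - (b - a) := by
  intro b hb'
  have h := my_antitone (f := fun x => f x + x) (f' := fun x => f' x + 1)
    (fun x hx => (hd x hx).add (hasDerivAt_id x))
    (fun x hx => by have := hb x (Ioi_subset_Ici_self hx); show f' x + 1 ≤ 0; linarith)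
  have := h (self_mem_Ici) hb' hb'
  simp only at this
  linarith

private lemma my_decay_eq {f f' : ℝ → ℝ} {a : ℝ}
    (hd : ∀ x ∈ Ici a, HasDerivAt f (f' x) x)
    (hb : ∀ x ∈ Ici a, f' x = -1) :
    ∀ b ∈ Ici a, f b = f a - (b - a) := by
  intro b hb'
  have h1 := my_decay_le hd (fun x hx => le_of_eq (hb x hx)) b hb'
  have h2 := my_monotone (f := fun x => f x + x) (f' := fun x => f' x + 1)
    (fun x hx => (hd x hx).add (hasDerivAt_id x))
    (fun x hx => by have := hb x (Ioi_subset_Ici_self hx); show 0 ≤ f' x + 1; linarith)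
    self_mem_Ici hb' hb'
  simp only at h2
  linarith

private lemma my_gronwall {f f' : ℝ → ℝ} {a k : ℝ}
    (hd : ∀ x ∈ Ici a, HasDerivAt f (f' x) x)
    (hb : ∀ x ∈ Ici a, -(k * f x) ≤ f' x) :
    ∀ b ∈ Ici a, f a ≤ Real.exp (k * (b - a)) * f b := by
  intro b hab
  have hmono := my_monotone (f := fun x => f x * Real.exp (k * x))
    (f' := fun x => f' x * Real.exp (k * x) + f x * (Real.exp (k * x) * k))
    (fun x hx => (hd x hx).mul (by simpa using ((hasDerivAt_id x).const_mul k).exp))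
    (fun x hx => by
      have h1 := hb x (Ioi_subset_Ici_self hx)
      have h2 := Real.exp_pos (k * x)
      show 0 ≤ f' x * Real.exp (k * x) + f x * (Real.exp (k * x) * k)
      nlinarith)
  have h := hmono self_mem_Ici hab hab
  simp only at h
  calc f a = (f a * Real.exp (k * a)) * Real.exp (-(k * a)) := by
        rw [mul_assoc, ← Real.exp_add]; simp
    _ ≤ (f b * Real.exp (k * b)) * Real.exp (-(k * a)) :=
        mul_le_mul_of_nonneg_right h (le_of_lt (Real.exp_pos _))
    _ = Real.exp (k * (b - a)) * f b := by
        rw [mul_assoc, ← Real.exp_add, mul_comm]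
        ring_nf

private lemma my_traj {Ev : Type*} [NormedAddCommGroup Ev] [NormedSpace ℝ Ev]
    {u : ℝ → Ev} {g : ℝ → Ev} {K K' : ℝ → ℝ} {a : ℝ}
    (hu : ∀ x ∈ Ici a, HasDerivAt u (g x) x)
    (hK : ∀ x ∈ Ici a, HasDerivAt K (K' x) x)
    (hbound : ∀ x ∈ Ici a, ‖g x‖ ≤ -K' x) :
    ∀ b ∈ Ici a, ‖u b - u a‖ ≤ K a - K b := by
  intro b hab
  have key := image_norm_le_of_norm_deriv_right_le_deriv_boundary'
    (f := fun x => u x - u a) (f' := g) (a := a) (b := b)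
    (B := fun x => K a - K x) (B' := fun x => -K' x)
    (fun x hx => (((hu x hx.1).sub_const (u a)).continuousAt).continuousWithinAt)
    (fun x hx => ((hu x hx.1).sub_const (u a)).hasDerivWithinAt)
    (by simp)
    (fun x hx => (((hK x hx.1).const_sub (K a)).continuousAt).continuousWithinAt)
    (fun x hx => ((hK x hx.1).const_sub (K a)).hasDerivWithinAt)
    (fun x hx => hbound x hx.1)
  have := key (x := b) ⟨hab, le_refl b⟩
  linarith

private lemma my_ftc {g : ℝ → ℝ} {r₀ : ℝ} (hg : ContinuousOn g (Ioo 0 r₀))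
    {s₁ : ℝ} (hs₁ : s₁ ∈ Ioo (0:ℝ) r₀) :
    ∀ s ∈ Ioo (0:ℝ) r₀, HasDerivAt (fun x => ∫ z in s₁..x, g z) (g s) s := by
  intro s hs
  have hsub : Set.uIcc s₁ s ⊆ Ioo (0:ℝ) r₀ := (Set.ordConnected_Ioo).uIcc_subset hs₁ hs
  exact intervalIntegral.integral_hasDerivAt_right
    ((hg.mono hsub).intervalIntegrable)
    (hg.stronglyMeasurableAtFilter isOpen_Ioo s hs)
    ((hg.continuousAt (isOpen_Ioo.mem_nhds hs)))

set_option maxHeartbeats 4000000 in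
theorem stmt9 {N : ℕ} (E : EuclideanSpace ℝ (Fin N) → ℝ) (hE : ContDiff ℝ 2 E)
    (u : ℝ → EuclideanSpace ℝ (Fin N))
    (hode : ∀ t ≥ (0:ℝ), HasDerivAt u (-(gradient E (u t))) t)
    (hbdd : ∃ C, ∀ t ≥ (0:ℝ), ‖u t‖ ≤ C)
    (uinf : EuclideanSpace ℝ (Fin N)) (hconv : Tendsto u atTop (𝓝 uinf))
    (hcrit : gradient E uinf = 0)
    (hnontriv : uinf ∉ interior {x | gradient E x = 0})
    (η r₀ : ℝ) (φ : ℝ → ℝ) (hφ : DesingOn E uinf η r₀ φ)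
    (β s₀ : ℝ) (hβ : 0 < β) (hs₀ : 0 < s₀)
    (hlow : ∀ s ∈ Ioo (0:ℝ) s₀, β / Real.sqrt s ≤ deriv φ s)
    (ψ : ℝ → ℝ) (hψ : ∀ s ∈ Ico (0:ℝ) r₀, ψ (φ s) = s)
    (hψd : ∀ y ∈ φ '' Ioo (0:ℝ) r₀, DifferentiableAt ℝ ψ y)
    (γ : ℝ → ℝ) (hγmem : ∀ t ≥ (0:ℝ), γ t ∈ φ '' Ioo (0:ℝ) r₀)
    (hγode : ∀ t ≥ (0:ℝ), HasDerivAt γ (-(deriv ψ (γ t))) t) :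
    ∃ c > 0, ∃ d > 0, ∃ T ≥ (0:ℝ), ∀ t ≥ T,
      E (u t) - E uinf ≤ c * ψ (γ t) ∧ ‖u t - uinf‖ ≤ d * γ t := by
  obtain ⟨hr₀, hη, hφ0, hφnn, hφc, hφd, hφdc, hφdp, hball, hKL⟩ := hφ
  set H : ℝ → ℝ := fun t => E (u t) - E uinf with hHdef
  have hEdiff : Differentiable ℝ E := hE.differentiable (by norm_num)
  -- derivative of H
  have hHd : ∀ t ≥ (0:ℝ), HasDerivAt H (-‖gradient E (u t)‖^2) t := by
    intro t ht
    have h1 : HasDerivAt (fun x => E (u x))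
        ((InnerProductSpace.toDual ℝ _ (gradient E (u t))) (-(gradient E (u t)))) t :=
      ((hEdiff (u t)).hasGradientAt.hasFDerivAt).comp_hasDerivAt t (hode t ht)
    have h2 : ((InnerProductSpace.toDual ℝ _ (gradient E (u t))) (-(gradient E (u t))))
        = -‖gradient E (u t)‖^2 := by
      rw [InnerProductSpace.toDual_apply_apply, inner_neg_right, real_inner_self_eq_norm_sq]
    rw [h2] at h1
    exact h1.sub_const (E uinf)
  have hHanti : AntitoneOn H (Ici 0) :=
    my_antitone hHd (fun x hx => neg_nonpos.2 (by positivity))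
  have hHtend : Tendsto H atTop (𝓝 0) := by
    have h1 : Tendsto (fun t => E (u t)) atTop (𝓝 (E uinf)) :=
      ((hEdiff.continuous.continuousAt).tendsto).comp hconv
    have := h1.sub_const (E uinf)
    simpa using this
  have hH0 : ∀ t ≥ (0:ℝ), 0 ≤ H t := by
    intro t ht
    refine le_of_tendsto hHtend ?_
    filter_upwards [eventually_ge_atTop t] with s hs
    exact hHanti ht (le_trans ht hs) hs
  -- T₀ : time after which u is in the ball
  obtain ⟨Tu, hTu⟩ := (Metric.tendsto_atTop.1 hconv) η hη
  set T₀ : ℝ := max Tu 0 with hT₀def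
  have hT₀0 : (0:ℝ) ≤ T₀ := le_max_right _ _
  have hmemball : ∀ t ≥ T₀, u t ∈ Metric.ball uinf η := by
    intro t ht
    exact Metric.mem_ball.2 (hTu t (le_trans (le_max_left _ _) ht))
  -- φ strictly monotone
  have hφmono : StrictMonoOn φ (Ico 0 r₀) := by
    apply strictMonoOn_of_deriv_pos (convex_Ico 0 r₀) hφc
    intro x hx
    rw [interior_Ico] at hx
    exact hφdp x hx
  have h0mem : (0:ℝ) ∈ Ico (0:ℝ) r₀ := ⟨le_refl 0, hr₀⟩
  -- γ and ψ∘γ basic facts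
  set g : ℝ → ℝ := fun t => ψ (γ t) with hgdef
  have hgmem : ∀ t ≥ (0:ℝ), g t ∈ Ioo (0:ℝ) r₀ ∧ φ (g t) = γ t := by
    intro t ht
    obtain ⟨s, hs, hphis⟩ := hγmem t ht
    have : g t = s := by rw [hgdef]; simp only [← hphis]; exact hψ s (Ioo_subset_Ico_self hs)
    rw [this]
    exact ⟨hs, hphis⟩
  have hγpos : ∀ t ≥ (0:ℝ), 0 < γ t := by
    intro t ht
    obtain ⟨hmem, heq⟩ := hgmem t ht
    have := hφmono h0mem (Ioo_subset_Ico_self hmem) hmem.1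
    rw [hφ0, heq] at this
    exact this
  -- inverse function derivative identity
  have hinv : ∀ s ∈ Ioo (0:ℝ) r₀, deriv ψ (φ s) * deriv φ s = 1 := by
    intro s hs
    have h1 : HasDerivAt (ψ ∘ φ) (deriv ψ (φ s) * deriv φ s) s :=
      ((hψd (φ s) ⟨s, hs, rfl⟩).hasDerivAt).comp s ((hφd s hs).hasDerivAt)
    have h2 : (ψ ∘ φ) =ᶠ[𝓝 s] id := by
      filter_upwards [isOpen_Ioo.mem_nhds hs] with x hx
      exact hψ x (Ioo_subset_Ico_self hx)
    have h3 : HasDerivAt (ψ ∘ φ) 1 s := (hasDerivAt_id s).congr_of_eventuallyEq h2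
    exact h1.unique h3
  have hinvγ : ∀ t ≥ (0:ℝ), deriv ψ (γ t) * deriv φ (g t) = 1 := by
    intro t ht
    have := hinv (g t) (hgmem t ht).1
    rwa [(hgmem t ht).2] at this
  have hψγpos : ∀ t ≥ (0:ℝ), 0 < deriv ψ (γ t) := by
    intro t ht
    have h1 := hinvγ t ht
    have h2 := hφdp (g t) (hgmem t ht).1
    nlinarith
  -- the auxiliary scale s₁
  obtain ⟨s₁, hs₁pos, hs₁r₀, hs₁s₀⟩ : ∃ s₁ : ℝ, 0 < s₁ ∧ s₁ < r₀ ∧ s₁ < s₀ := by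
    refine ⟨min s₀ r₀ / 2, by positivity, ?_, ?_⟩
    · have : min s₀ r₀ ≤ r₀ := min_le_right _ _
      have : 0 < min s₀ r₀ := lt_min hs₀ hr₀
      linarith
    · have : min s₀ r₀ ≤ s₀ := min_le_left _ _
      have : 0 < min s₀ r₀ := lt_min hs₀ hr₀
      linarith
  have hs₁mem : s₁ ∈ Ioo (0:ℝ) r₀ := ⟨hs₁pos, hs₁r₀⟩
  -- lower bound for φ : φ s ≥ 2 β √s on (0, s₁]
  have hφlb : ∀ s ∈ Ioc (0:ℝ) s₁, 2 * β * Real.sqrt s ≤ φ s := by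
    intro s hs
    have hq : MonotoneOn (fun z => φ z - 2 * β * Real.sqrt z) (Icc 0 s₁) := by
      apply monotoneOn_of_deriv_nonneg (convex_Icc 0 s₁)
      · apply ContinuousOn.sub
        · exact hφc.mono (fun z hz => ⟨hz.1, lt_of_le_of_lt hz.2 hs₁r₀⟩)
        · exact (continuous_const.mul Real.continuous_sqrt).continuousOn
      · intro z hz
        rw [interior_Icc] at hz
        have hz0 : (0:ℝ) < z := hz.1
        have hd : HasDerivAt (fun z => φ z - 2 * β * Real.sqrt z)
            (deriv φ z - 2 * β * (1 / (2 * Real.sqrt z))) z :=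
          ((hφd z ⟨hz0, lt_trans hz.2 hs₁r₀⟩).hasDerivAt).sub
            ((Real.hasDerivAt_sqrt hz0.ne').const_mul (2 * β))
        exact hd.differentiableAt.differentiableWithinAt
      · intro z hz
        rw [interior_Icc] at hz
        have hz0 : (0:ℝ) < z := hz.1
        have hd : HasDerivAt (fun z => φ z - 2 * β * Real.sqrt z)
            (deriv φ z - 2 * β * (1 / (2 * Real.sqrt z))) z :=
          ((hφd z ⟨hz0, lt_trans hz.2 hs₁r₀⟩).hasDerivAt).sub
            ((Real.hasDerivAt_sqrt hz0.ne').const_mul (2 * β))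
        rw [hd.deriv]
        have hlz := hlow z ⟨hz0, lt_trans hz.2 hs₁s₀⟩
        have hsq : Real.sqrt z ≠ 0 := (Real.sqrt_pos.2 hz0).ne'
        have : 2 * β * (1 / (2 * Real.sqrt z)) = β / Real.sqrt z := by
          field_simp
        rw [this]
        linarith
    have h0 : (0:ℝ) ∈ Icc (0:ℝ) s₁ := ⟨le_refl 0, le_of_lt hs₁pos⟩
    have hsmem : s ∈ Icc (0:ℝ) s₁ := ⟨le_of_lt hs.1, hs.2⟩
    have := hq h0 hsmem hs.1.le
    simp only [Real.sqrt_zero, mul_zero, hφ0, sub_zero] at this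
    linarith
  -- The potential Φ
  obtain ⟨Φ, hΦd⟩ : ∃ Φ : ℝ → ℝ, ∀ s ∈ Ioo (0:ℝ) r₀, HasDerivAt Φ ((deriv φ s)^2) s :=
    ⟨_, my_ftc (hφdc.pow 2) hs₁mem⟩
  have hΦmono : StrictMonoOn Φ (Ioo 0 r₀) := by
    apply strictMonoOn_of_deriv_pos (convex_Ioo 0 r₀)
    · exact fun x hx => (hΦd x hx).continuousAt.continuousWithinAt
    · intro x hx
      rw [isOpen_Ioo.interior_eq] at hx
      rw [(hΦd x hx).deriv]
      exact pow_pos (hφdp x hx) 2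
  have hΦrefl : ∀ a ∈ Ioo (0:ℝ) r₀, ∀ b ∈ Ioo (0:ℝ) r₀, Φ a ≤ Φ b → a ≤ b := by
    intro a ha b hb h
    by_contra hab
    push_neg at hab
    exact absurd h (not_le.2 (hΦmono hb ha hab))
  -- case analysis on whether H vanishes
  by_cases hA : ∀ t ≥ T₀, H t ≠ 0
  · -- main case : H positive forever
    have hHpos : ∀ t ≥ T₀, 0 < H t := fun t ht =>
      lt_of_le_of_ne (hH0 t (le_trans hT₀0 ht)) (Ne.symm (hA t ht))
    have hHmem : ∀ t ≥ T₀, H t ∈ Ioo (0:ℝ) r₀ := by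
      intro t ht
      refine ⟨hHpos t ht, ?_⟩
      have := hball (u t) (hmemball t ht)
      rwa [abs_of_nonneg (hH0 t (le_trans hT₀0 ht))] at this
    have hKLt : ∀ t ≥ T₀, 1 ≤ deriv φ (H t) * ‖gradient E (u t)‖ := by
      intro t ht
      have hne : E (u t) ≠ E uinf := by
        intro h
        exact hA t ht (by rw [hHdef]; simp [h])
      have := hKL (u t) (hmemball t ht) hne
      rwa [abs_of_nonneg (hH0 t (le_trans hT₀0 ht))] at this
    -- derivative facts in the main case
    have hWd : ∀ t ∈ Ici T₀, HasDerivAt (fun t => Φ (H t))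
        ((deriv φ (H t))^2 * (-‖gradient E (u t)‖^2)) t := by
      intro t ht
      exact (hΦd (H t) (hHmem t ht)).comp t (hHd t (le_trans hT₀0 ht))
    have hWb : ∀ t ∈ Ici T₀, (deriv φ (H t))^2 * (-‖gradient E (u t)‖^2) ≤ -1 := by
      intro t ht
      have h1 := hKLt t ht
      nlinarith [sq_nonneg (deriv φ (H t) * ‖gradient E (u t)‖)]
    have hW := my_decay_le hWd hWb
    have hVd : ∀ a ≥ (0:ℝ), ∀ t ∈ Ici a, HasDerivAt (fun t => Φ (g t)) (-1) t := by
      intro a ha t ht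
      have ht0 : (0:ℝ) ≤ t := le_trans ha ht
      have hgd : HasDerivAt g (deriv ψ (γ t) * -(deriv ψ (γ t))) t :=
        ((hψd (γ t) (hγmem t ht0)).hasDerivAt).comp t (hγode t ht0)
      have h1 : HasDerivAt (fun t => Φ (g t))
          ((deriv φ (g t))^2 * (deriv ψ (γ t) * -(deriv ψ (γ t)))) t :=
        (hΦd (g t) (hgmem t ht0).1).comp t hgd
      have h2 : (deriv φ (g t))^2 * (deriv ψ (γ t) * -(deriv ψ (γ t))) = -1 := by
        have e1 := hinvγ t ht0
        nlinarith [e1]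
      rwa [h2] at h1
    have hV : ∀ a ≥ (0:ℝ), ∀ b ≥ a, Φ (g b) = Φ (g a) - (b - a) := by
      intro a ha b hb
      exact my_decay_eq (hVd a ha) (fun x _ => rfl) b hb
    obtain ⟨τ, hτle, hτ0⟩ : ∃ τ : ℝ, Φ (H T₀) - Φ (g T₀) ≤ τ ∧ 0 ≤ τ :=
      ⟨max (Φ (H T₀) - Φ (g T₀)) 0, le_max_left _ _, le_max_right _ _⟩
    -- key comparison
    have hkey : ∀ t ≥ T₀ + τ, H t ≤ g (t - τ) := by
      intro t ht
      have ht' : T₀ ≤ t := le_trans (by linarith) ht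
      have h1 := hW t ht'
      have h2 : Φ (g (t - τ)) = Φ (g T₀) - (t - τ - T₀) := hV T₀ hT₀0 (t - τ) (by linarith)
      have h3 : Φ (H T₀) - Φ (g T₀) ≤ τ := hτle
      have h4 : Φ (H t) ≤ Φ (g (t - τ)) := by
        linarith
      exact hΦrefl _ (hHmem t ht') _ (hgmem (t - τ) (by linarith)).1 h4
    -- trajectory length estimate
    have hKd : ∀ t ∈ Ici T₀, HasDerivAt (fun t => φ (H t))
        (deriv φ (H t) * (-‖gradient E (u t)‖^2)) t := by
      intro t ht
      exact ((hφd (H t) (hHmem t ht)).hasDerivAt).comp t (hHd t (le_trans hT₀0 ht))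
    have hnorm : ∀ t ≥ T₀, ‖u t - uinf‖ ≤ φ (H t) := by
      intro t ht
      have htraj := my_traj (a := t) (u := u) (g := fun x => -(gradient E (u x)))
        (K := fun t => φ (H t)) (K' := fun x => deriv φ (H x) * (-‖gradient E (u x)‖^2))
        (fun x hx => hode x (le_trans (le_trans hT₀0 ht) hx))
        (fun x hx => hKd x (le_trans ht hx))
        (fun x hx => by
          have h1 := hKLt x (le_trans ht hx)
          have h2 : ‖-(gradient E (u x))‖ = ‖gradient E (u x)‖ := norm_neg _
          rw [h2]
          show ‖gradient E (u x)‖ ≤ -(deriv φ (H x) * -‖gradient E (u x)‖ ^ 2)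
          nlinarith [mul_le_mul_of_nonneg_right h1 (norm_nonneg (gradient E (u x))),
            norm_nonneg (gradient E (u x))])
      have h1 : Tendsto (fun b => ‖u b - u t‖) atTop (𝓝 ‖uinf - u t‖) :=
        ((hconv.sub_const (u t)).norm)
      have h2 : Tendsto (fun b => φ (H b)) atTop (𝓝 0) := by
        have hc : ContinuousWithinAt φ (Ico 0 r₀) 0 := hφc 0 h0mem
        have hm : Tendsto H atTop (𝓝[Ico 0 r₀] 0) := by
          rw [tendsto_nhdsWithin_iff]
          refine ⟨hHtend, ?_⟩
          filter_upwards [eventually_ge_atTop T₀] with b hb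
          exact ⟨hH0 b (le_trans hT₀0 hb), (hHmem b hb).2⟩
        have := hc.tendsto.comp hm
        rwa [hφ0] at this
      have h3 : Tendsto (fun b => φ (H t) - φ (H b)) atTop (𝓝 (φ (H t) - 0)) :=
        tendsto_const_nhds.sub h2
      have h4 : ‖uinf - u t‖ ≤ φ (H t) - 0 := by
        refine le_of_tendsto_of_tendsto h1 h3 ?_
        filter_upwards [eventually_ge_atTop t] with b hb
        exact htraj b hb
      rw [norm_sub_rev]
      linarith
    -- subcase split on whether g gets small
    by_cases hB : ∃ T₂ ≥ (0:ℝ), g T₂ < s₁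
    · obtain ⟨T₂, hT₂0, hT₂⟩ := hB
      have hganti : AntitoneOn g (Ici 0) := by
        apply my_antitone (f' := fun t => deriv ψ (γ t) * -(deriv ψ (γ t)))
        · intro t ht
          exact ((hψd (γ t) (hγmem t ht)).hasDerivAt).comp t (hγode t ht)
        · intro t ht
          nlinarith [hψγpos t (le_of_lt ht)]
      have hgsmall : ∀ t ≥ T₂, g t < s₁ := by
        intro t ht
        exact lt_of_le_of_lt (hganti hT₂0 (le_trans hT₂0 ht) ht) hT₂
      -- pointwise bounds on deriv ψ (γ t) for t ≥ T₂
      have hb1 : ∀ t ≥ T₂, deriv ψ (γ t) * β ≤ Real.sqrt (g t) := by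
        intro t ht
        have ht0 : (0:ℝ) ≤ t := le_trans hT₂0 ht
        have hgt := (hgmem t ht0).1
        have hlz := hlow (g t) ⟨hgt.1, lt_trans (hgsmall t ht) hs₁s₀⟩
        have hsqpos : 0 < Real.sqrt (g t) := Real.sqrt_pos.2 hgt.1
        have hinvt := hinvγ t ht0
        have hφp := hφdp (g t) hgt
        -- deriv ψ (γ t) = 1 / deriv φ (g t)
        have heq : deriv ψ (γ t) = 1 / deriv φ (g t) := eq_one_div_of_mul_eq_one_left hinvt
        rw [heq, div_mul_eq_mul_div, one_mul, div_le_iff₀ hφp]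
        calc β = Real.sqrt (g t) * (β / Real.sqrt (g t)) := by field_simp
          _ ≤ Real.sqrt (g t) * deriv φ (g t) :=
              mul_le_mul_of_nonneg_left hlz hsqpos.le
      have hb2 : ∀ t ≥ T₂, 2 * β * Real.sqrt (g t) ≤ γ t := by
        intro t ht
        have ht0 : (0:ℝ) ≤ t := le_trans hT₂0 ht
        have := hφlb (g t) ⟨(hgmem t ht0).1.1, (hgsmall t ht).le⟩
        rwa [(hgmem t ht0).2] at this
      -- Gronwall for γ
      have hγgron : ∀ a ≥ T₂, ∀ b ≥ a, γ a ≤ Real.exp ((1/(2*β^2)) * (b - a)) * γ b := by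
        intro a ha
        apply my_gronwall (f := γ) (k := (1/(2*β^2))) (f' := fun t => -(deriv ψ (γ t)))
        · exact fun x hx => hγode x (le_trans (le_trans hT₂0 ha) hx)
        · intro x hx
          have hxT₂ : T₂ ≤ x := le_trans ha hx
          have hx0 : (0:ℝ) ≤ x := le_trans hT₂0 hxT₂
          have h1 := hb1 x hxT₂
          have h2 := hb2 x hxT₂
          have h3 : deriv ψ (γ x) * β * (2 * β) ≤ Real.sqrt (g x) * (2 * β) :=
            mul_le_mul_of_nonneg_right h1 (by positivity)
          have h4 : deriv ψ (γ x) * (2 * β^2) ≤ γ x := by nlinarith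
          have h5 : deriv ψ (γ x) ≤ 1/(2*β^2) * γ x := by
            rw [div_mul_eq_mul_div, one_mul, le_div_iff₀ (by positivity : (0:ℝ) < 2*β^2)]
            linarith
          linarith
      -- Gronwall for g = ψ ∘ γ
      have hggron : ∀ a ≥ T₂, ∀ b ≥ a, g a ≤ Real.exp ((1/β^2) * (b - a)) * g b := by
        intro a ha
        apply my_gronwall (f := g) (k := (1/β^2)) (f' := fun t => deriv ψ (γ t) * -(deriv ψ (γ t)))
        · intro x hx
          have hx0 : (0:ℝ) ≤ x := le_trans (le_trans hT₂0 ha) hx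
          exact ((hψd (γ x) (hγmem x hx0)).hasDerivAt).comp x (hγode x hx0)
        · intro x hx
          have hxT₂ : T₂ ≤ x := le_trans ha hx
          have hx0 : (0:ℝ) ≤ x := le_trans hT₂0 hxT₂
          have h1 := hb1 x hxT₂
          have hψp := hψγpos x hx0
          have hgpos := (hgmem x hx0).1.1
          have hsq : Real.sqrt (g x) ^ 2 = g x := Real.sq_sqrt hgpos.le
          have hψβ : 0 ≤ deriv ψ (γ x) * β := (mul_pos hψp hβ).le
          have h2 : (deriv ψ (γ x) * β)^2 ≤ g x := by
            nlinarith [h1, hψβ, Real.sqrt_nonneg (g x), hsq]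
          have h3 : (deriv ψ (γ x))^2 * β^2 ≤ g x := by nlinarith
          have h4 : (deriv ψ (γ x))^2 ≤ 1/β^2 * g x := by
            rw [div_mul_eq_mul_div, one_mul, le_div_iff₀ (by positivity : (0:ℝ) < β^2)]
            linarith
          nlinarith
      -- conclusion
      refine ⟨Real.exp ((1/β^2) * τ), Real.exp_pos _,
        Real.exp ((1/(2*β^2)) * τ), Real.exp_pos _,
        max (T₀ + τ) (T₂ + τ), le_trans (by linarith) (le_max_left _ _), ?_⟩
      intro t ht
      have ht1 : T₀ + τ ≤ t := le_trans (le_max_left _ _) ht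
      have ht2 : T₂ + τ ≤ t := le_trans (le_max_right _ _) ht
      have ht0 : (0:ℝ) ≤ t := by linarith
      have htτ : T₂ ≤ t - τ := by linarith
      have hHle : H t ≤ g (t - τ) := hkey t ht1
      constructor
      · -- energy bound
        have h1 := hggron (t - τ) htτ t (by linarith)
        have h2 : t - (t - τ) = τ := by ring
        rw [h2] at h1
        calc E (u t) - E uinf = H t := rfl
          _ ≤ g (t - τ) := hHle
          _ ≤ Real.exp ((1/β^2) * τ) * g t := h1
          _ = Real.exp ((1/β^2) * τ) * ψ (γ t) := rfl
      · -- norm bound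
        have h1 := hγgron (t - τ) htτ t (by linarith)
        have h2 : t - (t - τ) = τ := by ring
        rw [h2] at h1
        have hn := hnorm t (by linarith)
        have hφm : φ (H t) ≤ φ (g (t - τ)) := by
          apply hφmono.monotoneOn (Ioo_subset_Ico_self (hHmem t (by linarith)))
            (Ioo_subset_Ico_self (hgmem (t - τ) (by linarith)).1) hHle
        have h3 : φ (g (t - τ)) = γ (t - τ) := (hgmem (t - τ) (by linarith)).2
        calc ‖u t - uinf‖ ≤ φ (H t) := hn
          _ ≤ φ (g (t - τ)) := hφm
          _ = γ (t - τ) := h3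
          _ ≤ Real.exp ((1/(2*β^2)) * τ) * γ t := h1
    · -- g never gets below s₁
      push_neg at hB
      obtain ⟨T₃', hT₃'⟩ := (eventually_atTop).1 (hHtend (Iio_mem_nhds hs₁pos))
      set T₃ : ℝ := max T₃' T₀ with hT₃def
      refine ⟨1, one_pos, 1, one_pos, T₃, le_trans hT₀0 (le_max_right _ _), ?_⟩
      intro t ht
      have htT₀ : T₀ ≤ t := le_trans (le_max_right _ _) ht
      have ht0 : (0:ℝ) ≤ t := le_trans hT₀0 htT₀
      have hHt : H t < s₁ := hT₃' t (le_trans (le_max_left _ _) ht)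
      have hgt : s₁ ≤ g t := hB t ht0
      constructor
      · calc E (u t) - E uinf = H t := rfl
          _ ≤ s₁ := hHt.le
          _ ≤ g t := hgt
          _ = 1 * ψ (γ t) := (one_mul _).symm
      · have hn := hnorm t htT₀
        have hφm : φ (H t) ≤ φ (g t) := by
          apply hφmono.monotoneOn ⟨hH0 t ht0, (hHmem t htT₀).2⟩
            (Ioo_subset_Ico_self (hgmem t ht0).1) (le_trans hHt.le hgt)
        calc ‖u t - uinf‖ ≤ φ (H t) := hn
          _ ≤ φ (g t) := hφm
          _ = γ t := (hgmem t ht0).2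
          _ = 1 * γ t := (one_mul _).symm
  · -- degenerate case : H vanishes at some time, trajectory is eventually constant
    push_neg at hA
    obtain ⟨t₁, ht₁T₀, ht₁⟩ := hA
    have ht₁0 : (0:ℝ) ≤ t₁ := le_trans hT₀0 ht₁T₀
    have hH0' : ∀ t ≥ t₁, H t = 0 := by
      intro t ht
      have h1 : H t ≤ H t₁ := hHanti ht₁0 (le_trans ht₁0 ht) ht
      have h2 : 0 ≤ H t := hH0 t (le_trans ht₁0 ht)
      rw [ht₁] at h1
      linarith
    have hgrad0 : ∀ t > t₁, gradient E (u t) = 0 := by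
      intro t ht
      have h1 : HasDerivAt H 0 t := by
        refine (hasDerivAt_const t (0:ℝ)).congr_of_eventuallyEq ?_
        filter_upwards [Ioi_mem_nhds ht] with x hx
        exact hH0' x (le_of_lt hx)
      have h2 := (hHd t (le_trans ht₁0 ht.le)).unique h1
      have h3 : ‖gradient E (u t)‖^2 = 0 := by linarith
      have := pow_eq_zero_iff (n := 2) (by norm_num) |>.1 h3
      exact norm_eq_zero.1 this
    have hconst : ∀ t ≥ t₁ + 1, u t = u (t₁ + 1) := by
      intro t ht
      have := constant_of_has_deriv_right_zero (f := u) (a := t₁ + 1) (b := t)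
        (fun x hx => (hode x (by cases hx with | intro h1 h2 => linarith)).continuousAt.continuousWithinAt)
        (fun x hx => by
          have hg := hgrad0 x (by cases hx with | intro h1 h2 => linarith)
          have := hode x (by cases hx with | intro h1 h2 => linarith)
          rw [hg, neg_zero] at this
          exact this.hasDerivWithinAt)
      exact this t ⟨ht, le_refl t⟩
    have huinf : u (t₁ + 1) = uinf := by
      have h1 : Tendsto u atTop (𝓝 (u (t₁ + 1))) := by
        refine Tendsto.congr' ?_ (tendsto_const_nhds (x := u (t₁ + 1)))
        filter_upwards [eventually_ge_atTop (t₁ + 1)] with b hb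
        exact (hconst b hb).symm
      exact tendsto_nhds_unique h1 hconv
    refine ⟨1, one_pos, 1, one_pos, t₁ + 1, by linarith, ?_⟩
    intro t ht
    have ht0 : (0:ℝ) ≤ t := by linarith
    constructor
    · have h1 : E (u t) - E uinf = 0 := hH0' t (by linarith)
      have h2 : 0 < ψ (γ t) := (hgmem t ht0).1.1
      rw [h1, one_mul]
      exact h2.le
    · have h1 : u t = uinf := by rw [hconst t ht, huinf]
      rw [h1, sub_self, norm_zero, one_mul]
      exact (hγpos t ht0).le
end
end

section
/- Let F : ℝ^N → ℝ^N be locally Lipschitz, and let E : ℝ^N → ℝ be twice continuously differentiable. Assume that for every R > 0, F is quasi-gradient for E on the closed ball B̄(0, R) with some angle constant α_R > 0, that E has the KL property at every point, and that for every R > 0 there exists b > 0 with ‖∇E(u)‖ ≤ b·‖F(u)‖ for all u ∈ B̄(0, R). Let u solve u′(t) + F(u(t)) = 0 and assume u(t) converges to some rest point u∞ of F. Let φ be a desingularizing function of E at u∞ satisfying φ′(s) ≥ β·s^{−1/2} for some β > 0 and all small s > 0, set ψ = φ^{−1}, and let γ solve γ′(t) + ψ′(γ(t)) = 0 with γ(0)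 > 0. Then there exist constants c, d > 0 and t₀ ∈ ℝ such that ‖u(t) − u∞‖ ≤ d·γ(c·t + t₀) for all sufficiently large t. -/
open Real Set Metric Filter Topology MeasureTheory RealInnerProductSpace

noncomputable section

set_option maxHeartbeats 2000000 in
theorem stmt10 {N : ℕ} (F : EuclideanSpace ℝ (Fin N) → EuclideanSpace ℝ (Fin N))
    (hF : LocallyLipschitz F)
    (E : EuclideanSpace ℝ (Fin N) → ℝ) (hE : ContDiff ℝ 2 E)
    (αR : ℝ → ℝ)
    (hqg : ∀ R > (0:ℝ), 0 < αR R ∧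
      (∀ v ∈ closedBall (0 : EuclideanSpace ℝ (Fin N)) R,
        αR R * (‖gradient E v‖ * ‖F v‖) ≤ ⟪gradient E v, F v⟫) ∧
      (∀ v ∈ closedBall (0 : EuclideanSpace ℝ (Fin N)) R,
        (gradient E v = 0 ↔ F v = 0)))
    (hKL : ∀ x, KLAt E x)
    (hbound : ∀ R > (0:ℝ), ∃ b > (0:ℝ),
      ∀ v ∈ closedBall (0 : EuclideanSpace ℝ (Fin N)) R, ‖gradient E v‖ ≤ b * ‖F v‖)
    (u : ℝ → EuclideanSpace ℝ (Fin N))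
    (hode : ∀ t ≥ (0:ℝ), HasDerivAt u (-(F (u t))) t)
    (uinf : EuclideanSpace ℝ (Fin N)) (hrest : F uinf = 0)
    (hconv : Tendsto u atTop (𝓝 uinf))
    (η r₀ : ℝ) (φ : ℝ → ℝ) (hφ : DesingOn E uinf η r₀ φ)
    (β s₀ : ℝ) (hβ : 0 < β) (hs₀ : 0 < s₀)
    (hlow : ∀ s ∈ Ioo (0:ℝ) s₀, β / Real.sqrt s ≤ deriv φ s)
    (ψ : ℝ → ℝ) (hψ : ∀ s ∈ Ico (0:ℝ) r₀, ψ (φ s) = s)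
    (hψd : ∀ y ∈ φ '' Ioo (0:ℝ) r₀, DifferentiableAt ℝ ψ y)
    (γ : ℝ → ℝ) (hγmem : ∀ t ≥ (0:ℝ), γ t ∈ φ '' Ioo (0:ℝ) r₀)
    (hγode : ∀ t ≥ (0:ℝ), HasDerivAt γ (-(deriv ψ (γ t))) t) :
    ∃ c > 0, ∃ d > 0, ∃ t₀ : ℝ, ∀ᶠ t in atTop, ‖u t - uinf‖ ≤ d * γ (c * t + t₀) := by
  obtain ⟨hr₀, hη, hφ0, hφnn, hφc, hφd, hφ'c, hφ'pos, hEr₀, hKLφ⟩ := hφ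
  -- the trajectory is bounded: choose R
  have hucont : ∀ t ≥ (0:ℝ), ContinuousAt u t := fun t ht => (hode t ht).continuousAt
  obtain ⟨R, hR, huR⟩ :
      ∃ R > (0:ℝ), ∀ t ≥ (0:ℝ), u t ∈ closedBall (0 : EuclideanSpace ℝ (Fin N)) R := by
    have h1 : ∀ᶠ t in atTop, ‖u t‖ < ‖uinf‖ + 1 :=
      (hconv.norm).eventually_lt_const (lt_add_one _)
    obtain ⟨M, hM⟩ := eventually_atTop.1 h1
    have hK : IsCompact (u '' Icc 0 (max M 0)) :=
      isCompact_Icc.image_of_continuousOn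
        (fun t ht => (hucont t ht.1).continuousWithinAt)
    obtain ⟨r, hr⟩ := hK.isBounded.subset_closedBall (0 : EuclideanSpace ℝ (Fin N))
    refine ⟨max r (‖uinf‖ + 1) + 1, by positivity, fun t ht => ?_⟩
    rw [mem_closedBall_zero_iff]
    rcases le_or_gt t (max M 0) with h | h
    · have := hr ⟨t, ⟨ht, h⟩, rfl⟩
      rw [mem_closedBall_zero_iff] at this
      calc ‖u t‖ ≤ r := this
        _ ≤ max r (‖uinf‖ + 1) + 1 := by
            have := le_max_left r (‖uinf‖ + 1); linarith
    · have := hM t (le_of_lt (lt_of_le_of_lt (le_max_left M 0) h))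
      have h2 := le_max_right r (‖uinf‖ + 1); linarith
  obtain ⟨hα, hangle, hequiv⟩ := hqg R hR
  set α := αR R with hαdef
  obtain ⟨b, hb, hgb⟩ := hbound R hR
  -- gradient facts
  have hEdiff : ∀ x, DifferentiableAt ℝ E x :=
    fun x => (hE.differentiable two_ne_zero).differentiableAt
  -- the energy along the trajectory
  set H : ℝ → ℝ := fun t => E (u t) - E uinf with hHdef
  have hH : ∀ t ≥ (0:ℝ), HasDerivAt H (-(⟪gradient E (u t), F (u t)⟫)) t := by
    intro t ht
    have h1 : HasFDerivAt E (InnerProductSpace.toDual ℝ _ (gradient E (u t))) (u t) :=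
      (hEdiff (u t)).hasGradientAt
    have h2 := (h1.comp_hasDerivAt t (hode t ht)).sub_const (E uinf)
    refine h2.congr_deriv ?_
    simp [inner_neg_right, InnerProductSpace.toDual_apply_apply]
  have hinner : ∀ t ≥ (0:ℝ), 0 ≤ ⟪gradient E (u t), F (u t)⟫ := by
    intro t ht
    have h1 := hangle (u t) (huR t ht)
    have h0 : 0 ≤ α * (‖gradient E (u t)‖ * ‖F (u t)‖) :=
      mul_nonneg hα.le (mul_nonneg (norm_nonneg _) (norm_nonneg _))
    linarith
  have hHcont : ContinuousOn H (Ici 0) :=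
    fun t ht => (hH t ht).continuousAt.continuousWithinAt
  have hHanti : AntitoneOn H (Ici 0) := by
    apply antitoneOn_of_deriv_nonpos (convex_Ici 0) hHcont
    · intro x hx
      rw [interior_Ici] at hx
      exact (hH x (le_of_lt hx)).differentiableAt.differentiableWithinAt
    · intro x hx
      rw [interior_Ici] at hx
      rw [(hH x (le_of_lt hx)).deriv]
      simpa using hinner x (le_of_lt hx)
  have hH0 : Tendsto H atTop (𝓝 0) := by
    have h1 : Tendsto (fun t => E (u t)) atTop (𝓝 (E uinf)) :=
      (hE.continuous.continuousAt).tendsto.comp hconv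
    have := h1.sub_const (E uinf)
    simpa using this
  have hHnn : ∀ t ≥ (0:ℝ), 0 ≤ H t := by
    intro t ht
    refine le_of_tendsto hH0 (eventually_atTop.2 ⟨t, fun t' ht' => ?_⟩)
    exact hHanti ht (le_trans ht ht') ht'
  -- φ is strictly monotone on Ico 0 r₀
  have hφmono : StrictMonoOn φ (Ico 0 r₀) := by
    apply strictMonoOn_of_deriv_pos (convex_Ico 0 r₀) hφc
    intro x hx
    rw [interior_Ico] at hx
    exact hφ'pos x hx
  have hγpos : ∀ t ≥ (0:ℝ), 0 < γ t := by
    intro t ht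
    obtain ⟨s, hs, hsφ⟩ := hγmem t ht
    rw [← hsφ, ← hφ0]
    exact hφmono ⟨le_rfl, hr₀⟩ ⟨le_of_lt hs.1, hs.2⟩ hs.1
  -- σ := ψ ∘ γ facts
  have hσ : ∀ t ≥ (0:ℝ), ψ (γ t) ∈ Ioo (0:ℝ) r₀ ∧ φ (ψ (γ t)) = γ t := by
    intro t ht
    obtain ⟨s, hs, hsφ⟩ := hγmem t ht
    have h1 : ψ (γ t) = s := by rw [← hsφ, hψ s (Ioo_subset_Ico_self hs)]
    rw [h1, hsφ]
    exact ⟨hs, rfl⟩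
  have hψ' : ∀ s ∈ Ioo (0:ℝ) r₀, deriv ψ (φ s) * deriv φ s = 1 := by
    intro s hs
    have h1 : HasDerivAt (ψ ∘ φ) (deriv ψ (φ s) * deriv φ s) s :=
      ((hψd (φ s) ⟨s, hs, rfl⟩).hasDerivAt).comp s (hφd s hs).hasDerivAt
    have h2 : HasDerivAt (ψ ∘ φ) 1 s := by
      have heq : (id : ℝ → ℝ) =ᶠ[𝓝 s] (ψ ∘ φ) := by
        filter_upwards [Ioo_mem_nhds hs.1 hs.2] with x hx
        exact (hψ x (Ioo_subset_Ico_self hx)).symm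
      exact (hasDerivAt_id s).congr_of_eventuallyEq heq.symm
    exact h1.unique h2
  -- the rescaling function Φ
  set p := ψ (γ 0) with hpdef
  have hp : p ∈ Ioo (0:ℝ) r₀ := (hσ 0 le_rfl).1
  set Φ : ℝ → ℝ := fun x => ∫ s in p..x, (deriv φ s)^2 with hΦdef
  have hg_cont : ContinuousOn (fun s => (deriv φ s)^2) (Ioo 0 r₀) := hφ'c.pow 2
  have hΦderiv : ∀ x ∈ Ioo (0:ℝ) r₀, HasDerivAt Φ ((deriv φ x)^2) x := by
    intro x hx
    apply intervalIntegral.integral_hasDerivAt_right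
    · exact (hg_cont.mono (Set.ordConnected_Ioo.uIcc_subset hp hx)).intervalIntegrable
    · exact (hg_cont.stronglyMeasurableAtFilter isOpen_Ioo) x hx
    · exact hg_cont.continuousAt (Ioo_mem_nhds hx.1 hx.2)
  have hΦmono : StrictMonoOn Φ (Ioo 0 r₀) := by
    apply strictMonoOn_of_deriv_pos (convex_Ioo 0 r₀)
    · exact fun x hx => (hΦderiv x hx).continuousAt.continuousWithinAt
    · intro x hx
      rw [interior_Ioo] at hx
      rw [(hΦderiv x hx).deriv]
      exact pow_pos (hφ'pos x hx) 2
  -- along γ, Φ(ψ(γ t)) + t is monotone (in fact constant)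
  have hΘd : ∀ t ≥ (0:ℝ), HasDerivAt (fun t => Φ (ψ (γ t)) + t) 0 t := by
    intro t ht
    obtain ⟨hmem, hval⟩ := hσ t ht
    have ha : HasDerivAt (fun t => ψ (γ t)) (deriv ψ (γ t) * -(deriv ψ (γ t))) t :=
      ((hψd (γ t) (hγmem t ht)).hasDerivAt).comp t (hγode t ht)
    have hb2 : HasDerivAt (fun t => Φ (ψ (γ t)))
        ((deriv φ (ψ (γ t)))^2 * (deriv ψ (γ t) * -(deriv ψ (γ t)))) t :=
      by have := (hΦderiv _ hmem).comp t ha; exact this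
    have hc := hb2.add (hasDerivAt_id t)
    refine hc.congr_deriv ?_
    have h1 : deriv ψ (γ t) * deriv φ (ψ (γ t)) = 1 := by
      have h2 := hψ' (ψ (γ t)) hmem
      rw [hval] at h2
      linarith [h2]
    nlinarith [h1]
  have hΘmono : MonotoneOn (fun t => Φ (ψ (γ t)) + t) (Ici 0) := by
    apply monotoneOn_of_deriv_nonneg (convex_Ici 0)
    · exact fun t ht => (hΘd t ht).continuousAt.continuousWithinAt
    · intro t ht
      rw [interior_Ici] at ht
      exact (hΘd t (le_of_lt ht)).differentiableAt.differentiableWithinAt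
    · intro t ht
      rw [interior_Ici] at ht
      rw [(hΘd t (le_of_lt ht)).deriv]
  have hσlb : ∀ s ≥ (0:ℝ), Φ p - s ≤ Φ (ψ (γ s)) := by
    intro s hs
    have := hΘmono (self_mem_Ici) hs hs
    simp only [hpdef] at this ⊢
    linarith
  -- choose T
  have hev : ∀ᶠ t in atTop, 0 ≤ t ∧ u t ∈ ball uinf η ∧ H t < p := by
    have h1 : ∀ᶠ t in atTop, u t ∈ ball uinf η := hconv (ball_mem_nhds uinf hη)
    have h2 : ∀ᶠ t in atTop, H t < p := hH0.eventually_lt_const hp.1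
    exact (eventually_ge_atTop 0).and (h1.and h2)
  obtain ⟨T, hT⟩ := eventually_atTop.1 hev
  have hT0 : 0 ≤ T := (hT T le_rfl).1
  by_cases hP : ∀ t ≥ T, 0 < H t
  · -- main case : the energy never reaches its limit
    have hHmem : ∀ t ≥ T, H t ∈ Ioo (0:ℝ) r₀ := by
      intro t ht
      refine ⟨hP t ht, lt_of_le_of_lt (le_abs_self _) ?_⟩
      exact hEr₀ (u t) (hT t ht).2.1
    have hKL' : ∀ t ≥ T, 1 ≤ deriv φ (H t) * ‖gradient E (u t)‖ := by
      intro t ht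
      have hne : E (u t) ≠ E uinf := by
        have := hP t ht; simp only [hHdef] at this
        intro hcontra; rw [hcontra] at this; simp at this
      have h1 := hKLφ (u t) (hT t ht).2.1 hne
      rwa [abs_of_pos (hP t ht)] at h1
    -- the key differential inequality constant
    have hkey : ∀ t ≥ T, α / b ≤ (deriv φ (H t))^2 * ⟪gradient E (u t), F (u t)⟫ := by
      intro t ht
      have ht0 : (0:ℝ) ≤ t := le_trans hT0 ht
      set g := gradient E (u t) with hgdef
      set f := F (u t) with hfdef
      set D := deriv φ (H t) with hDdef
      have h1 : α * (‖g‖ * ‖f‖) ≤ ⟪g, f⟫ := hangle (u t) (huR t ht0)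
      have h2 : ‖g‖ ≤ b * ‖f‖ := hgb (u t) (huR t ht0)
      have h3 : 1 ≤ D * ‖g‖ := hKL' t ht
      have h4 : 0 < D := hφ'pos (H t) (hHmem t ht)
      have hgn := norm_nonneg g
      have hfn := norm_nonneg f
      have h5 : α * ‖g‖^2 ≤ b * ⟪g, f⟫ := by
        nlinarith [mul_le_mul_of_nonneg_left h2 (mul_nonneg hα.le hgn),
          mul_le_mul_of_nonneg_left h1 hb.le]
      have h6 : 1 ≤ D^2 * ‖g‖^2 := by
        nlinarith [mul_le_mul h3 h3 zero_le_one (by positivity : (0:ℝ) ≤ D * ‖g‖)]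
      rw [div_le_iff₀ hb]
      calc α = α * 1 := (mul_one α).symm
        _ ≤ α * (D^2 * ‖g‖^2) := mul_le_mul_of_nonneg_left h6 hα.le
        _ = D^2 * (α * ‖g‖^2) := by ring
        _ ≤ D^2 * (b * ⟪g, f⟫) := mul_le_mul_of_nonneg_left h5 (sq_nonneg _)
        _ = D^2 * ⟪g, f⟫ * b := by ring
    -- Φ(H t) + (α/b) t is antitone on [T, ∞)
    have hΞd : ∀ t ≥ T, HasDerivAt (fun t => Φ (H t) + (α/b) * t)
        ((deriv φ (H t))^2 * (-(⟪gradient E (u t), F (u t)⟫)) + α/b) t := by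
      intro t ht
      have h1 : HasDerivAt (fun t => Φ (H t))
          ((deriv φ (H t))^2 * (-(⟪gradient E (u t), F (u t)⟫))) t :=
        (hΦderiv _ (hHmem t ht)).comp t (hH t (le_trans hT0 ht))
      have h2 : HasDerivAt (fun t => (α/b) * t) (α/b) t := by
        simpa using (hasDerivAt_id t).const_mul (α/b)
      exact h1.add h2
    have hΞanti : AntitoneOn (fun t => Φ (H t) + (α/b) * t) (Ici T) := by
      apply antitoneOn_of_deriv_nonpos (convex_Ici T)
      · exact fun t ht => (hΞd t ht).continuousAt.continuousWithinAt
      · intro t ht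
        rw [interior_Ici] at ht
        exact (hΞd t (le_of_lt ht)).differentiableAt.differentiableWithinAt
      · intro t ht
        rw [interior_Ici] at ht
        rw [(hΞd t (le_of_lt ht)).deriv]
        have := hkey t (le_of_lt ht)
        linarith
    -- comparison : H t < ψ (γ ((α/b)*(t-T))) for t ≥ T
    have hcomp : ∀ t ≥ T, H t < ψ (γ ((α/b)*(t-T))) := by
      intro t ht
      have hs : (0:ℝ) ≤ (α/b)*(t-T) := by
        apply mul_nonneg (le_of_lt (div_pos hα hb)); linarith
      have h1 : Φ (H t) + (α/b) * t ≤ Φ (H T) + (α/b) * T :=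
        hΞanti self_mem_Ici ht ht
      have h2 : Φ (H T) < Φ p := hΦmono (hHmem T le_rfl) hp (hT T le_rfl).2.2
      have h3 : Φ p - (α/b)*(t-T) ≤ Φ (ψ (γ ((α/b)*(t-T)))) := hσlb _ hs
      have h4 : Φ (H t) < Φ (ψ (γ ((α/b)*(t-T)))) := by linarith
      exact (hΦmono.lt_iff_lt (hHmem t ht) (hσ _ hs).1).mp h4
    -- length estimate : α * ‖u t - uinf‖ ≤ φ (H t) for t ≥ T
    have hlen : ∀ t ≥ T, ‖u t - uinf‖ ≤ φ (H t) / α := by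
      intro t₁ ht₁
      have hbd : ∀ t₂ ≥ t₁, ‖u t₂ - u t₁‖ ≤ (φ (H t₁) - φ (H t₂)) / α := by
        intro t₂ ht₂
        have key : ∀ ⦃x⦄, x ∈ Icc t₁ t₂ → ‖u x - u t₁‖ ≤ (φ (H t₁) - φ (H x)) / α := by
          refine image_norm_le_of_norm_deriv_right_le_deriv_boundary'
            (f := fun x => u x - u t₁) (f' := fun x => -(F (u x)))
            (B := fun x => (φ (H t₁) - φ (H x)) / α)
            (B' := fun x => (0 - deriv φ (H x) * -(⟪gradient E (u x), F (u x)⟫)) / α)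
            ?_ ?_ ?_ ?_ ?_ ?_
          · intro x hx
            have hx0 : (0:ℝ) ≤ x := le_trans (le_trans hT0 ht₁) hx.1
            exact ((hode x hx0).sub_const (u t₁)).continuousAt.continuousWithinAt
          · intro x hx
            have hx0 : (0:ℝ) ≤ x := le_trans (le_trans hT0 ht₁) hx.1
            exact (((hode x hx0).sub_const (u t₁)).hasDerivWithinAt)
          · simp
          · intro x hx
            have hxT : T ≤ x := le_trans ht₁ hx.1
            have hd : HasDerivAt (fun x => (φ (H t₁) - φ (H x)) / α)
                ((0 - deriv φ (H x) * -(⟪gradient E (u x), F (u x)⟫)) / α) x := by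
              have hφH : HasDerivAt (fun x => φ (H x))
                  (deriv φ (H x) * -(⟪gradient E (u x), F (u x)⟫)) x :=
                ((hφd (H x) (hHmem x hxT)).hasDerivAt).comp x (hH x (le_trans hT0 hxT))
              exact (((hasDerivAt_const x (φ (H t₁))).sub hφH).div_const α)
            exact hd.continuousAt.continuousWithinAt
          · intro x hx
            have hxT : T ≤ x := le_trans ht₁ hx.1
            have hφH : HasDerivAt (fun x => φ (H x))
                (deriv φ (H x) * -(⟪gradient E (u x), F (u x)⟫)) x :=
              ((hφd (H x) (hHmem x hxT)).hasDerivAt).comp x (hH x (le_trans hT0 hxT))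
            exact ((((hasDerivAt_const x (φ (H t₁))).sub hφH).div_const α)).hasDerivWithinAt
          · intro x hx
            have hxT : T ≤ x := le_trans ht₁ hx.1
            have hx0 : (0:ℝ) ≤ x := le_trans hT0 hxT
            rw [norm_neg]
            set g := gradient E (u x) with hgdef
            set f := F (u x) with hfdef
            set D := deriv φ (H x) with hDdef
            have h1 : α * (‖g‖ * ‖f‖) ≤ ⟪g, f⟫ := hangle (u x) (huR x hx0)
            have h3 : 1 ≤ D * ‖g‖ := hKL' x hxT
            have h4 : 0 < D := hφ'pos (H x) (hHmem x hxT)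
            have hgn := norm_nonneg g
            have hfn := norm_nonneg f
            have hchain : α * ‖f‖ ≤ D * ⟪g, f⟫ := by
              calc α * ‖f‖ = α * 1 * ‖f‖ := by ring
                _ ≤ α * (D * ‖g‖) * ‖f‖ := by
                    apply mul_le_mul_of_nonneg_right
                      (mul_le_mul_of_nonneg_left h3 hα.le) hfn
                _ = D * (α * (‖g‖ * ‖f‖)) := by ring
                _ ≤ D * ⟪g, f⟫ := mul_le_mul_of_nonneg_left h1 h4.le
            rw [le_div_iff₀ hα]
            linarith
        have := key ⟨ht₂, le_rfl⟩
        exact this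
      have hlim : Tendsto (fun t₂ => ‖u t₂ - u t₁‖) atTop (𝓝 ‖uinf - u t₁‖) :=
        ((hconv.sub_const (u t₁)).norm)
      have hle : ‖uinf - u t₁‖ ≤ φ (H t₁) / α := by
        refine le_of_tendsto hlim (eventually_atTop.2 ⟨t₁, fun t₂ ht₂ => ?_⟩)
        have h1 := hbd t₂ ht₂
        have h2 : 0 ≤ φ (H t₂) := by
          apply hφnn
          exact Ioo_subset_Ico_self (hHmem t₂ (le_trans ht₁ ht₂))
        calc ‖u t₂ - u t₁‖ ≤ (φ (H t₁) - φ (H t₂)) / α := h1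
          _ ≤ φ (H t₁) / α := by
            apply div_le_div_of_nonneg_right _ hα.le
            linarith
      rwa [norm_sub_rev] at hle
    -- conclusion
    refine ⟨α/b, div_pos hα hb, 1/α, by positivity, -(α/b)*T, ?_⟩
    filter_upwards [eventually_ge_atTop T] with t ht
    have hs : (0:ℝ) ≤ (α/b)*(t-T) := by
      apply mul_nonneg (le_of_lt (div_pos hα hb)); linarith
    have h1 := hlen t ht
    have h2 := hcomp t ht
    have h3 : φ (H t) ≤ φ (ψ (γ ((α/b)*(t-T)))) := by
      apply le_of_lt
      exact hφmono (Ioo_subset_Ico_self (hHmem t ht))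
        (Ioo_subset_Ico_self (hσ _ hs).1) h2
    have h4 : φ (ψ (γ ((α/b)*(t-T)))) = γ ((α/b)*(t-T)) := (hσ _ hs).2
    have h5 : (α/b)*(t-T) = (α/b)*t + (-(α/b)*T) := by ring
    calc ‖u t - uinf‖ ≤ φ (H t) / α := h1
      _ ≤ γ ((α/b)*(t-T)) / α := by
          rw [← h4]
          exact div_le_div_of_nonneg_right h3 hα.le
      _ = 1/α * γ ((α/b)*t + (-(α/b)*T)) := by rw [h5]; ring
  · -- degenerate case : the energy reaches its limit, trajectory is eventually constant
    push_neg at hP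
    obtain ⟨t₁, ht₁, ht₁le⟩ := hP
    have ht₁0 : (0:ℝ) ≤ t₁ := le_trans hT0 ht₁
    have hzero : ∀ t ≥ t₁, H t = 0 := by
      intro t ht
      have h1 : H t ≤ H t₁ := hHanti ht₁0 (le_trans ht₁0 ht) ht
      have h2 := hHnn t (le_trans ht₁0 ht)
      linarith
    have hFz : ∀ t > t₁, F (u t) = 0 := by
      intro t ht
      have ht0 : (0:ℝ) ≤ t := le_trans ht₁0 (le_of_lt ht)
      have hc : HasDerivAt H 0 t := by
        have heq : (fun _ : ℝ => (0:ℝ)) =ᶠ[𝓝 t] H := by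
          filter_upwards [Ioi_mem_nhds ht] with x hx
          exact (hzero x (le_of_lt hx)).symm
        exact (hasDerivAt_const t (0:ℝ)).congr_of_eventuallyEq heq.symm
      have h1 : -(⟪gradient E (u t), F (u t)⟫) = 0 := (hH t ht0).unique hc
      have h2 := hangle (u t) (huR t ht0)
      have h3 : ‖gradient E (u t)‖ * ‖F (u t)‖ ≤ 0 := by
        nlinarith [norm_nonneg (gradient E (u t)), norm_nonneg (F (u t))]
      have h4 : gradient E (u t) = 0 ∨ F (u t) = 0 := by
        rcases mul_eq_zero.1 (le_antisymm h3
          (mul_nonneg (norm_nonneg _) (norm_nonneg _))) with h | h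
        · exact Or.inl (norm_eq_zero.1 h)
        · exact Or.inr (norm_eq_zero.1 h)
      rcases h4 with h | h
      · exact (hequiv (u t) (huR t ht0)).mp h
      · exact h
    have huconst : ∀ t > t₁, ∀ t' ≥ t, u t' = u t := by
      intro t ht t' ht'
      have key := norm_image_sub_le_of_norm_deriv_right_le_segment
        (f := u) (f' := fun x => -(F (u x))) (a := t) (b := t') (C := 0)
        (fun x hx => (hucont x (le_trans ht₁0 (le_trans (le_of_lt ht) hx.1))).continuousWithinAt)
        (fun x hx => (hode x (le_trans ht₁0 (le_trans (le_of_lt ht) hx.1))).hasDerivWithinAt)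
        (fun x hx => by
          rw [norm_neg, hFz x (lt_of_lt_of_le ht hx.1), norm_zero])
        t' ⟨ht', le_rfl⟩
      rw [zero_mul] at key
      have : ‖u t' - u t‖ ≤ 0 := key
      have := le_antisymm this (norm_nonneg _)
      rwa [norm_eq_zero, sub_eq_zero] at this
    have huinf : ∀ t > t₁, u t = uinf := by
      intro t ht
      have h1 : Tendsto u atTop (𝓝 (u t)) := by
        apply Tendsto.congr' _ (tendsto_const_nhds (x := u t))
        filter_upwards [eventually_ge_atTop t] with t' ht'
        exact (huconst t ht t' ht').symm
      exact tendsto_nhds_unique h1 hconv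
    refine ⟨1, one_pos, 1, one_pos, 0, ?_⟩
    filter_upwards [eventually_gt_atTop t₁, eventually_ge_atTop 0] with t ht ht0
    rw [huinf t ht, sub_self, norm_zero]
    have := hγpos (1*t+0) (by linarith)
    linarith
end
end
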